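/- arXiv:1102.3776 — 2 statements merged into one kernel-verified Lean document; each statement's English description precedes it below -/
import Mathlib

section
/- For every initial condition (x₀,y₀) ∈ O and every input u ∈ L^∞([0,r];U), the output of system (1.1) satisfies p(t,x₀,y₀;u) = q'(t,x₀,y₀;u) x₀ for all t ≥ 0, where p collects the measurable part of the integrated output and q is the integrated weighted transition matrix. -/
open MeasureTheory Matrix Set intervalIntegral Filter

noncomputable section

/-- `g` is locally Lipschitz on the set `s`. -/
def LocLipOn {α β : Type*} [PseudoMetricSpace α] [PseudoMetricSpace β]
    (s : Set α) (g : α → β) : Prop :=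
  ∀ z ∈ s, ∃ K : NNReal, ∃ t ∈ nhdsWithin z s, LipschitzOnWith K g t

/-- `u ∈ L^∞([0,r]; U)` : measurable, with values in `U` and (essentially) bounded on `[0,r]`. -/
def AdmOn (m : ℕ) (r : ℝ) (U : Set (Fin m → ℝ)) (u : ℝ → (Fin m → ℝ)) : Prop :=
  Measurable u ∧ (∀ t ∈ Icc (0:ℝ) r, u t ∈ U) ∧ ∃ M : ℝ, ∀ t ∈ Icc (0:ℝ) r, ‖u t‖ ≤ M

/-- `u ∈ L^∞_loc(ℝ₊; U)` : measurable, with values in `U` and bounded on compact subintervals of `ℝ₊`. -/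
def AdmLoc (m : ℕ) (U : Set (Fin m → ℝ)) (u : ℝ → (Fin m → ℝ)) : Prop :=
  Measurable u ∧ (∀ t, 0 ≤ t → u t ∈ U) ∧ ∀ T : ℝ, ∃ M : ℝ, ∀ t ∈ Icc (0:ℝ) T, ‖u t‖ ≤ M

/-- `u ∈ L^∞(ℝ₊; U)` : measurable, with values in `U` and bounded on `ℝ₊`. -/
def AdmBdd (m : ℕ) (U : Set (Fin m → ℝ)) (u : ℝ → (Fin m → ℝ)) : Prop :=
  Measurable u ∧ (∀ t, 0 ≤ t → u t ∈ U) ∧ ∃ M : ℝ, ∀ t, 0 ≤ t → ‖u t‖ ≤ M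

/-- locally bounded on `ℝ₊`. -/
def LocBddF {E : Type*} [Norm E] (g : ℝ → E) : Prop :=
  ∀ T : ℝ, ∃ M : ℝ, ∀ t ∈ Icc (0:ℝ) T, ‖g t‖ ≤ M

/-- the sup norm `sup_{t ≥ 0} ‖g(t)‖`. -/
def supNorm {E : Type*} [Norm E] (g : ℝ → E) : ℝ :=
  ⨆ t : (Ici (0:ℝ)), ‖g (t : ℝ)‖

/-- `(x, y)` is a (Carathéodory) solution of system (1.1) on `ℝ₊`, for the input `u` :
`ẋ = A(y,u)x + b(y,u)`, `ẏ = f(y,u) + C'(y)x`, `(x(t), y(t)) ∈ O`. -/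
def IsSystemSol (n k m : ℕ) (O : Set ((Fin n → ℝ) × (Fin k → ℝ)))
    (A : (Fin k → ℝ) → (Fin m → ℝ) → Matrix (Fin n) (Fin n) ℝ)
    (b : (Fin k → ℝ) → (Fin m → ℝ) → (Fin n → ℝ))
    (Cm : (Fin k → ℝ) → Matrix (Fin k) (Fin n) ℝ)
    (f : (Fin k → ℝ) → (Fin m → ℝ) → (Fin k → ℝ))
    (u : ℝ → (Fin m → ℝ)) (x : ℝ → (Fin n → ℝ)) (y : ℝ → (Fin k → ℝ)) : Prop :=
  ContinuousOn x (Ici (0:ℝ)) ∧ ContinuousOn y (Ici (0:ℝ)) ∧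
  (∀ t, 0 ≤ t → (x t, y t) ∈ O) ∧
  (∀ t, 0 ≤ t → x t = x 0 + ∫ s in (0:ℝ)..t, (A (y s) (u s) *ᵥ x s + b (y s) (u s))) ∧
  (∀ t, 0 ≤ t → y t = y 0 + ∫ s in (0:ℝ)..t, (f (y s) (u s) + Cm (y s) *ᵥ x s))

/-- `Φ` is the transition matrix of the linear time-varying system `ż = A(y(t), u(t)) z`,
i.e. `Φ̇ = A(y(t),u(t)) Φ`, `Φ(0) = I` (entrywise Carathéodory form), and `Φ(t)` is invertible. -/
def IsTransition (n k m : ℕ)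
    (A : (Fin k → ℝ) → (Fin m → ℝ) → Matrix (Fin n) (Fin n) ℝ)
    (y : ℝ → (Fin k → ℝ)) (u : ℝ → (Fin m → ℝ))
    (Φ : ℝ → Matrix (Fin n) (Fin n) ℝ) : Prop :=
  Φ 0 = 1 ∧ (∀ i j, Continuous fun t => Φ t i j) ∧ (∀ t : ℝ, IsUnit (Φ t).det) ∧
  ∀ (t : ℝ) (i j : Fin n),
    Φ t i j = (1 : Matrix (Fin n) (Fin n) ℝ) i j + ∫ s in (0:ℝ)..t, (A (y s) (u s) * Φ s) i j

/-- `q(t) = ∫₀ᵗ Φ'(s) C(s) ds ∈ ℝ^{n×k}` where `C(s) = (C'(y(s)))'`. -/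
def qmat (n k : ℕ) (Cm : (Fin k → ℝ) → Matrix (Fin k) (Fin n) ℝ)
    (y : ℝ → (Fin k → ℝ)) (Φ : ℝ → Matrix (Fin n) (Fin n) ℝ) (t : ℝ) :
    Matrix (Fin n) (Fin k) ℝ :=
  Matrix.of fun i j => ∫ s in (0:ℝ)..t, ((Φ s)ᵀ * (Cm (y s))ᵀ) i j

/-- `θ(t) = ∫₀ᵗ Φ(t) Φ⁻¹(τ) b(y(τ), u(τ)) dτ`. -/
def thetaVec (n k m : ℕ)
    (b : (Fin k → ℝ) → (Fin m → ℝ) → (Fin n → ℝ))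
    (y : ℝ → (Fin k → ℝ)) (u : ℝ → (Fin m → ℝ))
    (Φ : ℝ → Matrix (Fin n) (Fin n) ℝ) (t : ℝ) : Fin n → ℝ :=
  Φ t *ᵥ ∫ τ in (0:ℝ)..t, (Φ τ)⁻¹ *ᵥ b (y τ) (u τ)

/-- `p(t) = y(t) − y(0) − ∫₀ᵗ f(y(s),u(s)) ds − ∫₀ᵗ C'(y(s)) θ(s) ds`. -/
def pvec (n k m : ℕ)
    (b : (Fin k → ℝ) → (Fin m → ℝ) → (Fin n → ℝ))
    (Cm : (Fin k → ℝ) → Matrix (Fin k) (Fin n) ℝ)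
    (f : (Fin k → ℝ) → (Fin m → ℝ) → (Fin k → ℝ))
    (y : ℝ → (Fin k → ℝ)) (u : ℝ → (Fin m → ℝ))
    (Φ : ℝ → Matrix (Fin n) (Fin n) ℝ) (t : ℝ) : Fin k → ℝ :=
  y t - y 0 - (∫ s in (0:ℝ)..t, f (y s) (u s))
    - ∫ s in (0:ℝ)..t, Cm (y s) *ᵥ thetaVec n k m b y u Φ s

/-- `Q(r) = ∫₀ʳ q(t) q'(t) dt ∈ ℝ^{n×n}`. -/
def Qmat (n k : ℕ) (r : ℝ) (Cm : (Fin k → ℝ) → Matrix (Fin k) (Fin n) ℝ)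
    (y : ℝ → (Fin k → ℝ)) (Φ : ℝ → Matrix (Fin n) (Fin n) ℝ) :
    Matrix (Fin n) (Fin n) ℝ :=
  Matrix.of fun i j => ∫ t in (0:ℝ)..r, (qmat n k Cm y Φ t * (qmat n k Cm y Φ t)ᵀ) i j

/-- the operator `P(y,u) = Φ(r,y;u) Q⁻¹ ∫₀ʳ q(τ) p(τ) dτ + θ(r)` of (2.16). -/
def Pop (n k m : ℕ) (r : ℝ)
    (b : (Fin k → ℝ) → (Fin m → ℝ) → (Fin n → ℝ))
    (Cm : (Fin k → ℝ) → Matrix (Fin k) (Fin n) ℝ)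
    (f : (Fin k → ℝ) → (Fin m → ℝ) → (Fin k → ℝ))
    (Φop : (ℝ → (Fin k → ℝ)) → (ℝ → (Fin m → ℝ)) → ℝ → Matrix (Fin n) (Fin n) ℝ)
    (y : ℝ → (Fin k → ℝ)) (u : ℝ → (Fin m → ℝ)) : Fin n → ℝ :=
  Φop y u r *ᵥ ((Qmat n k r Cm y (Φop y u))⁻¹ *ᵥ
      ∫ τ in (0:ℝ)..r, qmat n k Cm y (Φop y u) τ *ᵥ pvec n k m b Cm f y u (Φop y u) τ)
    + thetaVec n k m b y u (Φop y u) r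

/-- the input `u` strongly distinguishes the state `(x₀, y₀) ∈ O` in time `r > 0` :
`max_{t ∈ [0,r]} |y(t,x₀,y₀;u) − y(t,ξ,y₀;u)| > 0` for every `ξ ≠ x₀` with `(ξ,y₀) ∈ O`. -/
def StronglyDist (n k m : ℕ) (O : Set ((Fin n → ℝ) × (Fin k → ℝ)))
    (Y : (Fin n → ℝ) → (Fin k → ℝ) → (ℝ → (Fin m → ℝ)) → ℝ → (Fin k → ℝ))
    (r : ℝ) (u : ℝ → (Fin m → ℝ)) (x₀ : Fin n → ℝ) (y₀ : Fin k → ℝ) : Prop :=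
  ∀ ξ : Fin n → ℝ, (ξ, y₀) ∈ O → ξ ≠ x₀ →
    ∃ t ∈ Icc (0:ℝ) r, 0 < ‖Y x₀ y₀ u t - Y ξ y₀ u t‖

/-- hypothesis (H1) : system (1.1) is strongly observable in time `r > 0`. -/
def H1prop (n k m : ℕ) (O : Set ((Fin n → ℝ) × (Fin k → ℝ))) (U : Set (Fin m → ℝ))
    (Y : (Fin n → ℝ) → (Fin k → ℝ) → (ℝ → (Fin m → ℝ)) → ℝ → (Fin k → ℝ))
    (r : ℝ) : Prop :=
  ∀ u, AdmLoc m U u → ∀ x₀ y₀, (x₀, y₀) ∈ O → StronglyDist n k m O Y r u x₀ y₀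

/-- hypothesis (R2) : the operator `P` is completely continuous with respect to `y`. -/
def R2prop (n k m : ℕ) (r : ℝ) (U : Set (Fin m → ℝ))
    (P : (ℝ → (Fin k → ℝ)) → (ℝ → (Fin m → ℝ)) → (Fin n → ℝ)) : Prop :=
  ∀ (S : Set (ℝ → (Fin k → ℝ))) (V : Set (ℝ → (Fin m → ℝ))),
    (∀ g ∈ S, Measurable g) → (∃ M : ℝ, ∀ g ∈ S, ∀ t ∈ Icc (0:ℝ) r, ‖g t‖ ≤ M) →
    (∀ v ∈ V, Measurable v ∧ ∀ t ∈ Icc (0:ℝ) r, v t ∈ U) →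
    (∃ M : ℝ, ∀ v ∈ V, ∀ t ∈ Icc (0:ℝ) r, ‖v t‖ ≤ M) →
    (∃ K : ℝ, ∀ g ∈ S, ∀ v ∈ V, ‖P g v‖ ≤ K) ∧
      ∀ ε > (0:ℝ), ∃ δ > (0:ℝ), ∀ g ∈ S, ∀ g' ∈ S, ∀ v ∈ V,
        (∀ t ∈ Icc (0:ℝ) r, ‖g t - g' t‖ < δ) → ‖P g v - P g' v‖ < ε

/-- `z` is the solution of the hybrid observer (3.1) with sampling period `r`, output signal `yt`,
input `u` and initial condition `z₀` : between the jump times `τ_i = i r` the state flows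
according to `ż = A(yt, u) z + b(yt, u)` and at the jump times
`z(τ_{i+1}) = P(δ_{τ_i} yt, δ_{τ_i} u)`. -/
def IsObs (n k m : ℕ) (r : ℝ)
    (A : (Fin k → ℝ) → (Fin m → ℝ) → Matrix (Fin n) (Fin n) ℝ)
    (b : (Fin k → ℝ) → (Fin m → ℝ) → (Fin n → ℝ))
    (P : (ℝ → (Fin k → ℝ)) → (ℝ → (Fin m → ℝ)) → (Fin n → ℝ))
    (u : ℝ → (Fin m → ℝ)) (yt : ℝ → (Fin k → ℝ))
    (z₀ : Fin n → ℝ) (z : ℝ → (Fin n → ℝ)) : Prop :=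
  z 0 = z₀ ∧
  (∀ i : ℕ, ContinuousOn z (Ico ((i : ℝ) * r) (((i : ℝ) + 1) * r)) ∧
    ∀ t ∈ Ico ((i : ℝ) * r) (((i : ℝ) + 1) * r),
      z t = z ((i : ℝ) * r) +
        ∫ s in ((i : ℝ) * r)..t, (A (yt s) (u s) *ᵥ z s + b (yt s) (u s))) ∧
  ∀ i : ℕ, z (((i : ℝ) + 1) * r) =
    P (fun s => yt ((i : ℝ) * r + s)) (fun s => u ((i : ℝ) * r + s))

lemma LocLipOn.continuousOn {α β : Type*} [PseudoMetricSpace α] [PseudoMetricSpace β]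
    {s : Set α} {g : α → β} (h : LocLipOn s g) : ContinuousOn g s := by
  intro z hz
  obtain ⟨K, t, ht, hlip⟩ := h z hz
  have hzt : z ∈ t := mem_of_mem_nhdsWithin hz ht
  exact (hlip.continuousOn z hzt).mono_of_mem_nhdsWithin ht

/-- scalar "nice on [0,t]" predicate: AE strongly measurable and bounded. -/
def Nice (t : ℝ) (v : ℝ → ℝ) : Prop :=
  AEStronglyMeasurable v (volume.restrict (Icc 0 t)) ∧ ∃ C, ∀ s ∈ Icc (0:ℝ) t, |v s| ≤ C

lemma Nice.add {t : ℝ} {v w : ℝ → ℝ} (hv : Nice t v) (hw : Nice t w) :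
    Nice t (fun s => v s + w s) := by
  obtain ⟨C, hC⟩ := hv.2; obtain ⟨D, hD⟩ := hw.2
  exact ⟨hv.1.add hw.1, ⟨C + D, fun s hs =>
    (abs_add_le _ _).trans (add_le_add (hC s hs) (hD s hs))⟩⟩

lemma Nice.sub {t : ℝ} {v w : ℝ → ℝ} (hv : Nice t v) (hw : Nice t w) :
    Nice t (fun s => v s - w s) := by
  obtain ⟨C, hC⟩ := hv.2; obtain ⟨D, hD⟩ := hw.2
  exact ⟨hv.1.sub hw.1, ⟨C + D, fun s hs =>
    (abs_sub _ _).trans (add_le_add (hC s hs) (hD s hs))⟩⟩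

lemma Nice.mul {t : ℝ} {v w : ℝ → ℝ} (hv : Nice t v) (hw : Nice t w) :
    Nice t (fun s => v s * w s) := by
  obtain ⟨C, hC⟩ := hv.2; obtain ⟨D, hD⟩ := hw.2
  refine ⟨hv.1.mul hw.1, ⟨|C| * |D|, fun s hs => ?_⟩⟩
  rw [abs_mul]
  exact mul_le_mul ((hC s hs).trans (le_abs_self C)) ((hD s hs).trans (le_abs_self D))
    (abs_nonneg _) (abs_nonneg _)

lemma Nice.congr {t : ℝ} {v w : ℝ → ℝ} (hv : Nice t v) (h : ∀ s, v s = w s) : Nice t w := by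
  have : v = w := funext h
  rwa [this] at hv

lemma Nice.finsetSum {t : ℝ} {ι : Type*} (s : Finset ι) {v : ι → ℝ → ℝ}
    (hv : ∀ i ∈ s, Nice t (v i)) : Nice t (fun x => ∑ i ∈ s, v i x) := by
  classical
  induction s using Finset.induction_on with
  | empty =>
    refine Nice.congr (v := fun _ => (0:ℝ)) ⟨aestronglyMeasurable_const, ⟨0, by simp⟩⟩
      (fun s => by simp)
  | @insert a s hnot ih =>
    refine Nice.congr (((hv a (Finset.mem_insert_self a s)).add
      (ih fun i hi => hv i (Finset.mem_insert_of_mem hi)))) (fun x => ?_)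
    rw [Finset.sum_insert hnot]

lemma nice_of_continuousOn {t : ℝ} {v : ℝ → ℝ} (hv : ContinuousOn v (Icc 0 t)) : Nice t v := by
  obtain ⟨C, hC⟩ := isCompact_Icc.exists_bound_of_continuousOn hv
  exact ⟨hv.aestronglyMeasurable measurableSet_Icc, ⟨C, fun s hs => hC s hs⟩⟩

lemma Nice.integrableOn {t : ℝ} {v : ℝ → ℝ} (hv : Nice t v) :
    IntegrableOn v (Icc 0 t) volume := by
  obtain ⟨C, hC⟩ := hv.2
  exact ⟨hv.1, HasFiniteIntegral.restrict_of_bounded (C := C)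
    (by simp [Real.volume_Icc])
    ((ae_restrict_iff' measurableSet_Icc).2 (ae_of_all _ hC))⟩

lemma Nice.intervalIntegrable {t : ℝ} {v : ℝ → ℝ} (hv : Nice t v)
    {a c : ℝ} (ha : a ∈ Icc (0:ℝ) t) (hc : c ∈ Icc (0:ℝ) t) :
    IntervalIntegrable v volume a c :=
  (hv.integrableOn.mono_set (uIcc_subset_Icc ha hc)).intervalIntegrable

lemma vecAESM {p : ℕ} {v : ℝ → Fin p → ℝ} {μ : Measure ℝ}
    (h : ∀ i, AEStronglyMeasurable (fun s => v s i) μ) : AEStronglyMeasurable v μ := by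
  have : AEMeasurable v μ := by
    choose g hgm hge using fun i => (h i).aemeasurable
    refine ⟨fun x i => g i x, measurable_pi_iff.2 hgm, ?_⟩
    have := (ae_all_iff (ι := Fin p)).2 hge
    filter_upwards [this] with s hs
    funext i; exact hs i
  exact this.aestronglyMeasurable

lemma niceVec_intervalIntegrable {p : ℕ} {t : ℝ} {v : ℝ → Fin p → ℝ}
    (h : ∀ i, Nice t (fun s => v s i))
    {a c : ℝ} (ha : a ∈ Icc (0:ℝ) t) (hc : c ∈ Icc (0:ℝ) t) :
    IntervalIntegrable v volume a c := by
  choose C hC using fun i => (h i).2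
  have hD : ∀ s ∈ Icc (0:ℝ) t, ‖v s‖ ≤ ∑ i, |C i| := by
    intro s hs
    refine (pi_norm_le_iff_of_nonneg (by positivity)).2 fun i => ?_
    calc ‖v s i‖ ≤ C i := hC i s hs
      _ ≤ |C i| := le_abs_self _
      _ ≤ ∑ j, |C j| := Finset.single_le_sum (fun j _ => abs_nonneg (C j)) (Finset.mem_univ i)
  have hI : IntegrableOn v (Icc 0 t) volume := by
    refine ⟨vecAESM (fun i => (h i).1), HasFiniteIntegral.restrict_of_bounded
      (C := ∑ i, |C i|) (by simp [Real.volume_Icc]) ?_⟩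
    exact (ae_restrict_iff' measurableSet_Icc).2 (ae_of_all _ hD)
  exact (hI.mono_set (uIcc_subset_Icc ha hc)).intervalIntegrable

lemma intervalIntegral_apply {p : ℕ} {v : ℝ → Fin p → ℝ} {a c : ℝ}
    (hv : IntervalIntegrable v volume a c) (i : Fin p) :
    (∫ s in a..c, v s) i = ∫ s in a..c, v s i := by
  have := (ContinuousLinearMap.proj (R := ℝ) (φ := fun _ : Fin p => ℝ) i).intervalIntegral_comp_comm hv
  simpa using this.symm

lemma comp_bound_aesm {k m : ℕ} {E : Type*} [NormedAddCommGroup E] [NormedSpace ℝ E]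
    [MeasurableSpace E] [BorelSpace E] [SecondCountableTopology E] [TietzeExtension.{0} E]
    (Ω : Set (Fin k → ℝ)) (U : Set (Fin m → ℝ)) (hUcl : IsClosed U)
    (G : (Fin k → ℝ) × (Fin m → ℝ) → E) (hG : ContinuousOn G (Ω ×ˢ U))
    (y : ℝ → (Fin k → ℝ)) (u : ℝ → (Fin m → ℝ)) (T : ℝ)
    (hy : ContinuousOn y (Icc 0 T)) (hyΩ : ∀ s ∈ Icc (0:ℝ) T, y s ∈ Ω)
    (hu : Measurable u) (huU : ∀ s ∈ Icc (0:ℝ) T, u s ∈ U)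
    (M : ℝ) (hM : ∀ s ∈ Icc (0:ℝ) T, ‖u s‖ ≤ M) :
    ∃ C, (∀ s ∈ Icc (0:ℝ) T, ‖G (y s, u s)‖ ≤ C) ∧
      AEStronglyMeasurable (fun s => G (y s, u s)) (volume.restrict (Icc 0 T)) := by
  have hK1 : IsCompact (y '' Icc 0 T) := isCompact_Icc.image_of_continuousOn hy
  have hK2 : IsCompact (U ∩ Metric.closedBall 0 M) :=
    Metric.isCompact_of_isClosed_isBounded (hUcl.inter Metric.isClosed_closedBall)
      (Metric.isBounded_closedBall.subset inter_subset_right)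
  set K := (y '' Icc 0 T) ×ˢ (U ∩ Metric.closedBall 0 M) with hKdef
  have hK : IsCompact K := hK1.prod hK2
  have hKS : K ⊆ Ω ×ˢ U := by
    rintro ⟨p1, p2⟩ ⟨hp1, hp2⟩
    obtain ⟨s, hs, rfl⟩ := hp1
    exact ⟨hyΩ s hs, hp2.1⟩
  have hGK : ContinuousOn G K := hG.mono hKS
  obtain ⟨G', hG'⟩ := ContinuousMap.exists_restrict_eq (Y := E) hK.isClosed
    ⟨K.restrict G, hGK.restrict⟩
  have hagree : ∀ p ∈ K, G' p = G p := by
    intro p hp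
    have := congrFun (congrArg ContinuousMap.toFun hG') ⟨p, hp⟩
    exact this
  have hmemK : ∀ s ∈ Icc (0:ℝ) T, (y s, u s) ∈ K := fun s hs =>
    ⟨mem_image_of_mem _ hs, ⟨huU s hs, by
      simpa [Metric.mem_closedBall, dist_zero_right] using hM s hs⟩⟩
  obtain ⟨C, hC⟩ := hK.exists_bound_of_continuousOn hGK
  refine ⟨C, fun s hs => hC _ (hmemK s hs), ?_⟩
  have hy' : AEMeasurable y (volume.restrict (Icc 0 T)) :=
    hy.aemeasurable measurableSet_Icc
  have hpair : AEMeasurable (fun s => (y s, u s)) (volume.restrict (Icc 0 T)) :=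
    hy'.prodMk hu.aemeasurable
  have h1 : AEStronglyMeasurable (fun s => G' (y s, u s)) (volume.restrict (Icc 0 T)) :=
    (G'.continuous.measurable.comp_aemeasurable hpair).aestronglyMeasurable
  refine h1.congr ?_
  exact (ae_restrict_iff' measurableSet_Icc).2 (ae_of_all _ fun s hs => hagree _ (hmemK s hs))

lemma fubini_triangle {kf hf : ℝ → ℝ} {t : ℝ} (ht : 0 ≤ t)
    (hk : IntegrableOn kf (Ioc 0 t) volume) (hh : IntegrableOn hf (Ioc 0 t) volume) :
    ∫ τ in (0:ℝ)..t, (∫ s in τ..t, kf s) * hf τ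
      = ∫ s in (0:ℝ)..t, kf s * ∫ τ in (0:ℝ)..s, hf τ := by
  set μ := volume.restrict (Ioc (0:ℝ) t) with hμ
  set S : Set (ℝ × ℝ) := {p : ℝ × ℝ | p.2 ≤ p.1} with hS
  have hSm : MeasurableSet S := measurableSet_le measurable_snd measurable_fst
  set F : ℝ → ℝ → ℝ := fun s τ => S.indicator (fun p => kf p.1 * hf p.2) (s, τ) with hF
  have hint : Integrable (Function.uncurry F) (μ.prod μ) := by
    have : Integrable (fun p : ℝ × ℝ => kf p.1 * hf p.2) (μ.prod μ) := hk.mul_prod hh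
    have h2 := this.indicator hSm
    refine h2.congr (ae_of_all _ fun p => ?_)
    simp [hF, Function.uncurry]
  have hswap := integral_integral_swap hint
  -- RHS of statement = ∫ s ∂μ, ∫ τ ∂μ, F s τ
  have hRHS : (∫ s, (∫ τ, F s τ ∂μ) ∂μ) = ∫ s in (0:ℝ)..t, kf s * ∫ τ in (0:ℝ)..s, hf τ := by
    rw [intervalIntegral.integral_of_le ht]
    refine setIntegral_congr_fun measurableSet_Ioc fun s hs => ?_
    have h1 : (fun τ => F s τ) = (Iic s).indicator (fun τ => kf s * hf τ) := by
      ext τ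
      by_cases h : τ ≤ s <;> simp [hF, hS, indicator, h]
    rw [h1, MeasureTheory.integral_indicator measurableSet_Iic, hμ, Measure.restrict_restrict measurableSet_Iic]
    have h2 : Iic s ∩ Ioc 0 t = Ioc 0 s := by
      ext τ
      simp only [mem_inter_iff, mem_Iic, mem_Ioc]
      exact ⟨fun h => ⟨h.2.1, h.1⟩, fun h => ⟨h.2, h.1, h.2.trans hs.2⟩⟩
    rw [h2, MeasureTheory.integral_const_mul, intervalIntegral.integral_of_le hs.1.le]
  have hLHS : (∫ τ, (∫ s, F s τ ∂μ) ∂μ) = ∫ τ in (0:ℝ)..t, (∫ s in τ..t, kf s) * hf τ := by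
    rw [intervalIntegral.integral_of_le ht]
    refine setIntegral_congr_fun measurableSet_Ioc fun τ hτ => ?_
    have h1 : (fun s => F s τ) = (Ici τ).indicator (fun s => kf s * hf τ) := by
      ext s
      by_cases h : τ ≤ s <;> simp [hF, hS, indicator, h]
    rw [h1, MeasureTheory.integral_indicator measurableSet_Ici, hμ, Measure.restrict_restrict measurableSet_Ici]
    have h2 : Ici τ ∩ Ioc 0 t = Icc τ t := by
      ext s
      simp only [mem_inter_iff, mem_Ici, mem_Ioc, mem_Icc]
      exact ⟨fun h => ⟨h.1, h.2.2⟩, fun h => ⟨h.1, hτ.1.trans_le h.1, h.2⟩⟩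
    rw [h2, integral_Icc_eq_integral_Ioc, MeasureTheory.integral_mul_const,
      intervalIntegral.integral_of_le hτ.2]
  rw [← hRHS, ← hLHS, hswap]

lemma gronwall_zero {E : Type*} [NormedAddCommGroup E] [NormedSpace ℝ E]
    (v φ : ℝ → E) (T M B : ℝ) (hM : 0 ≤ M)
    (heq : ∀ s ∈ Icc (0:ℝ) T, v s = ∫ τ in (0:ℝ)..s, φ τ)
    (hB : ∀ s ∈ Icc (0:ℝ) T, ‖v s‖ ≤ B)
    (hφ : ∀ s ∈ Icc (0:ℝ) T, ‖φ s‖ ≤ M * ‖v s‖) :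
    ∀ s ∈ Icc (0:ℝ) T, v s = 0 := by
  by_cases hT : 0 ≤ T
  swap
  · intro s hs; exact absurd (hs.1.trans hs.2) hT
  have hB0 : 0 ≤ B := (norm_nonneg _).trans (hB 0 ⟨le_refl 0, hT⟩)
  have key : ∀ j : ℕ, ∀ s ∈ Icc (0:ℝ) T, ‖v s‖ ≤ B * (M * s) ^ j / (j.factorial : ℝ) := by
    intro j
    induction j with
    | zero => intro s hs; simpa using hB s hs
    | succ j ih =>
      intro s hs
      have hbound : ∀ τ ∈ Ioc (0:ℝ) s, ‖φ τ‖ ≤ M * (B * (M * τ) ^ j / (j.factorial : ℝ)) := by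
        intro τ hτ
        have hτT : τ ∈ Icc (0:ℝ) T := ⟨hτ.1.le, hτ.2.trans hs.2⟩
        exact (hφ τ hτT).trans (mul_le_mul_of_nonneg_left (ih τ hτT) hM)
      have hg : IntervalIntegrable (fun τ => M * (B * (M * τ) ^ j / (j.factorial : ℝ)))
          volume 0 s := (Continuous.intervalIntegrable (by fun_prop) _ _)
      have h1 : ‖v s‖ ≤ |∫ τ in (0:ℝ)..s, M * (B * (M * τ) ^ j / (j.factorial : ℝ))| := by
        rw [heq s hs]
        refine intervalIntegral.norm_integral_le_abs_of_norm_le ?_ hg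
        have : uIoc (0:ℝ) s = Ioc 0 s := uIoc_of_le hs.1
        rw [this]
        exact (ae_restrict_iff' measurableSet_Ioc).2 (ae_of_all _ hbound)
      refine h1.trans ?_
      have hval : (∫ τ in (0:ℝ)..s, M * (B * (M * τ) ^ j / (j.factorial : ℝ)))
          = B * (M * s) ^ (j + 1) / ((j + 1).factorial : ℝ) := by
        have hrw : ∀ τ : ℝ, M * (B * (M * τ) ^ j / (j.factorial : ℝ))
            = (M * B * M ^ j / (j.factorial : ℝ)) * τ ^ j := by
          intro τ; rw [mul_pow]; ring
        simp_rw [hrw]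
        rw [intervalIntegral.integral_const_mul, integral_pow]
        have hfac : ((j + 1).factorial : ℝ) = (j + 1) * (j.factorial : ℝ) := by
          rw [Nat.factorial_succ]; push_cast; ring
        rw [hfac, mul_pow]
        have : (j.factorial : ℝ) ≠ 0 := Nat.cast_ne_zero.2 (Nat.factorial_ne_zero j)
        field_simp
        ring
      rw [hval]
      have hnn : 0 ≤ B * (M * s) ^ (j + 1) / ((j + 1).factorial : ℝ) :=
        div_nonneg (mul_nonneg hB0 (pow_nonneg (mul_nonneg hM hs.1) _)) (Nat.cast_nonneg _)
      exact le_of_eq (abs_of_nonneg hnn)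
  intro s hs
  have hlim : Tendsto (fun j : ℕ => B * (M * s) ^ j / (j.factorial : ℝ)) atTop (nhds 0) := by
    have h1 := FloorSemiring.tendsto_pow_div_factorial_atTop (K := ℝ) (M * s)
    have h2 := h1.const_mul B
    simpa [mul_div_assoc] using h2
  have hle : ‖v s‖ ≤ 0 := ge_of_tendsto hlim (Filter.Eventually.of_forall fun j => key j s hs)
  simpa using hle

lemma Nice.congrOn {t : ℝ} {v w : ℝ → ℝ} (hv : Nice t v)
    (h : ∀ s ∈ Icc (0:ℝ) t, v s = w s) : Nice t w := by
  obtain ⟨C, hC⟩ := hv.2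
  refine ⟨hv.1.congr ((ae_restrict_iff' measurableSet_Icc).2 (ae_of_all _ h)),
    ⟨C, fun s hs => ?_⟩⟩
  rw [← h s hs]; exact hC s hs

lemma Nice.mono {t τ : ℝ} {v : ℝ → ℝ} (h : Nice t v) (hsub : Icc (0:ℝ) τ ⊆ Icc (0:ℝ) t) :
    Nice τ v := by
  obtain ⟨C, hC⟩ := h.2
  exact ⟨h.1.mono_measure (Measure.restrict_mono hsub le_rfl), ⟨C, fun s hs => hC s (hsub hs)⟩⟩

lemma nice_const {t c : ℝ} : Nice t (fun _ => c) :=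
  ⟨aestronglyMeasurable_const, ⟨|c|, fun _ _ => le_refl _⟩⟩

lemma nice_mulVec {t : ℝ} {p q : ℕ} {M : ℝ → Matrix (Fin p) (Fin q) ℝ} {v : ℝ → Fin q → ℝ}
    (hM : ∀ i j, Nice t (fun s => M s i j)) (hv : ∀ j, Nice t (fun s => v s j)) (i : Fin p) :
    Nice t (fun s => (M s *ᵥ v s) i) :=
  Nice.congr (Nice.finsetSum Finset.univ fun j _ => (hM i j).mul (hv j))
    (fun s => by simp [Matrix.mulVec, dotProduct])

lemma nice_norm_bound {p : ℕ} {t : ℝ} {v : ℝ → Fin p → ℝ}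
    (h : ∀ i, Nice t (fun s => v s i)) : ∃ B, ∀ s ∈ Icc (0:ℝ) t, ‖v s‖ ≤ B := by
  choose C hC using fun i => (h i).2
  refine ⟨∑ i, |C i|, fun s hs => (pi_norm_le_iff_of_nonneg (by positivity)).2 fun i => ?_⟩
  calc ‖v s i‖ ≤ C i := hC i s hs
    _ ≤ |C i| := le_abs_self _
    _ ≤ ∑ j, |C j| := Finset.single_le_sum (fun j _ => abs_nonneg (C j)) (Finset.mem_univ i)

/-- Fact I, equation (2.5): the integrated output satisfies
`p(t,x₀,y₀;u) = q'(t,x₀,y₀;u) x₀` for all `t ≥ 0`. -/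
theorem fact_I_output_representation
    (n k m : ℕ) (O : Set ((Fin n → ℝ) × (Fin k → ℝ))) (hO : IsOpen O)
    (U : Set (Fin m → ℝ)) (hUne : U.Nonempty) (hUcl : IsClosed U)
    (A : (Fin k → ℝ) → (Fin m → ℝ) → Matrix (Fin n) (Fin n) ℝ)
    (b : (Fin k → ℝ) → (Fin m → ℝ) → (Fin n → ℝ))
    (Cm : (Fin k → ℝ) → Matrix (Fin k) (Fin n) ℝ)
    (f : (Fin k → ℝ) → (Fin m → ℝ) → (Fin k → ℝ))
    (hA : ∀ i j, LocLipOn (({y : Fin k → ℝ | ∃ x : Fin n → ℝ, (x, y) ∈ O}) ×ˢ U)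
      (fun p => A p.1 p.2 i j))
    (hb : LocLipOn (({y : Fin k → ℝ | ∃ x : Fin n → ℝ, (x, y) ∈ O}) ×ˢ U)
      (fun p => b p.1 p.2))
    (hCm : ∀ i j, LocLipOn {y : Fin k → ℝ | ∃ x : Fin n → ℝ, (x, y) ∈ O} (fun y => Cm y i j))
    (hf : LocLipOn (({y : Fin k → ℝ | ∃ x : Fin n → ℝ, (x, y) ∈ O}) ×ˢ U)
      (fun p => f p.1 p.2))
    (X : (Fin n → ℝ) → (Fin k → ℝ) → (ℝ → (Fin m → ℝ)) → ℝ → (Fin n → ℝ))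
    (Y : (Fin n → ℝ) → (Fin k → ℝ) → (ℝ → (Fin m → ℝ)) → ℝ → (Fin k → ℝ))
    (hXY : ∀ x₀ y₀, (x₀, y₀) ∈ O → ∀ u, AdmLoc m U u →
      IsSystemSol n k m O A b Cm f u (X x₀ y₀ u) (Y x₀ y₀ u) ∧
        X x₀ y₀ u 0 = x₀ ∧ Y x₀ y₀ u 0 = y₀)
    (hUniq : ∀ x₀ y₀, (x₀, y₀) ∈ O → ∀ u, AdmLoc m U u → ∀ x y,
      IsSystemSol n k m O A b Cm f u x y → x 0 = x₀ → y 0 = y₀ →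
        ∀ t, 0 ≤ t → x t = X x₀ y₀ u t ∧ y t = Y x₀ y₀ u t)
    (r : ℝ) (hr : 0 < r)
    (x₀ : Fin n → ℝ) (y₀ : Fin k → ℝ) (hxy₀ : (x₀, y₀) ∈ O)
    (u : ℝ → (Fin m → ℝ)) (hu : AdmLoc m U u) (huU : ∀ t ∈ Icc (0:ℝ) r, u t ∈ U)
    (Φ : ℝ → Matrix (Fin n) (Fin n) ℝ)
    (hΦ : IsTransition n k m A (Y x₀ y₀ u) u Φ) :
    ∀ t, 0 ≤ t →
      pvec n k m b Cm f (Y x₀ y₀ u) u Φ t = (qmat n k Cm (Y x₀ y₀ u) Φ t)ᵀ *ᵥ x₀ := by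
  intro t ht
  obtain ⟨hsol, hx0, hy0⟩ := hXY x₀ y₀ hxy₀ u hu
  obtain ⟨hxc, hyc, hmemO, hxeq, hyeq⟩ := hsol
  set x : ℝ → Fin n → ℝ := X x₀ y₀ u with hxdef
  set y : ℝ → Fin k → ℝ := Y x₀ y₀ u with hydef
  obtain ⟨hΦ0, hΦc, hΦdet, hΦeq⟩ := hΦ
  obtain ⟨humeas, huU', hubd⟩ := hu
  obtain ⟨Mu, hMu⟩ := hubd t
  have hI0 : (0:ℝ) ∈ Icc (0:ℝ) t := ⟨le_refl 0, ht⟩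
  have htI : t ∈ Icc (0:ℝ) t := ⟨ht, le_refl t⟩
  have hyT : ContinuousOn y (Icc 0 t) := hyc.mono Icc_subset_Ici_self
  have hxT : ContinuousOn x (Icc 0 t) := hxc.mono Icc_subset_Ici_self
  have hyΩ : ∀ s ∈ Icc (0:ℝ) t, y s ∈ {yy : Fin k → ℝ | ∃ xx : Fin n → ℝ, (xx, yy) ∈ O} :=
    fun s hs => ⟨x s, hmemO s hs.1⟩
  have huUt : ∀ s ∈ Icc (0:ℝ) t, u s ∈ U := fun s hs => huU' s hs.1
  set GAe : (Fin k → ℝ) × (Fin m → ℝ) → Fin n → Fin n → ℝ :=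
    fun p i j => A p.1 p.2 i j with hGAedef
  have hGA : ContinuousOn GAe
      ({yy : Fin k → ℝ | ∃ xx : Fin n → ℝ, (xx, yy) ∈ O} ×ˢ U) :=
    continuousOn_pi.2 fun i => continuousOn_pi.2 fun j => (hA i j).continuousOn
  obtain ⟨CA, hCAb, hCAm⟩ := comp_bound_aesm (E := Fin n → Fin n → ℝ) _ U hUcl GAe hGA y u t hyT hyΩ humeas huUt Mu hMu
  obtain ⟨Cb, hCbb, hCbm⟩ :=
    comp_bound_aesm (E := Fin n → ℝ) _ U hUcl _ hb.continuousOn y u t hyT hyΩ humeas huUt Mu hMu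
  obtain ⟨Cf, hCfb, hCfm⟩ :=
    comp_bound_aesm (E := Fin k → ℝ) _ U hUcl _ hf.continuousOn y u t hyT hyΩ humeas huUt Mu hMu
  have hAij : ∀ (s : ℝ) (i j : Fin n),
      |A (y s) (u s) i j| ≤ ‖GAe (y s, u s)‖ := by
    intro s i j
    have h1 : ‖GAe (y s, u s) i j‖ ≤ ‖GAe (y s, u s) i‖ := norm_le_pi_norm _ j
    have h2 : ‖GAe (y s, u s) i‖ ≤ ‖GAe (y s, u s)‖ := norm_le_pi_norm _ i
    simpa [hGAedef] using h1.trans h2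
  have nA : ∀ i j, Nice t (fun s => A (y s) (u s) i j) := by
    intro i j
    have hev : Continuous fun M : Fin n → Fin n → ℝ => M i j :=
      (continuous_apply j).comp (continuous_apply i)
    exact ⟨hev.comp_aestronglyMeasurable hCAm,
      ⟨CA, fun s hs => (hAij s i j).trans (hCAb s hs)⟩⟩
  have nb : ∀ i, Nice t (fun s => b (y s) (u s) i) := by
    intro i
    refine ⟨(continuous_apply i).comp_aestronglyMeasurable hCbm, ⟨Cb, fun s hs => ?_⟩⟩
    simpa using (norm_le_pi_norm (b (y s) (u s)) i).trans (hCbb s hs)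
  have nf : ∀ i, Nice t (fun s => f (y s) (u s) i) := by
    intro i
    refine ⟨(continuous_apply i).comp_aestronglyMeasurable hCfm, ⟨Cf, fun s hs => ?_⟩⟩
    simpa using (norm_le_pi_norm (f (y s) (u s)) i).trans (hCfb s hs)
  have nΦ : ∀ i j, Nice t (fun s => Φ s i j) := fun i j =>
    nice_of_continuousOn (hΦc i j).continuousOn
  have hΦcont : Continuous Φ := continuous_matrix fun i j => hΦc i j
  have hdetne : ∀ s, (Φ s).det ≠ 0 := fun s => isUnit_iff_ne_zero.1 (hΦdet s)
  have hΨcont : Continuous fun s => (Φ s)⁻¹ := by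
    have h1 : (fun s => (Φ s)⁻¹) = fun s => ((Φ s).det)⁻¹ • (Φ s).adjugate := by
      funext s
      rw [Matrix.inv_def, Ring.inverse_eq_inv]
    rw [h1]
    exact ((hΦcont.matrix_det).inv₀ hdetne).smul hΦcont.matrix_adjugate
  have nΨ : ∀ i j, Nice t (fun s => (Φ s)⁻¹ i j) := fun i j =>
    nice_of_continuousOn (hΨcont.matrix_elem i j).continuousOn
  have nC : ∀ i j, Nice t (fun s => Cm (y s) i j) := fun i j =>
    nice_of_continuousOn (((hCm i j).continuousOn).comp hyT hyΩ)
  have nx : ∀ i, Nice t (fun s => x s i) := fun i =>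
    nice_of_continuousOn (continuousOn_pi.1 hxT i)
  have nh : ∀ i, Nice t (fun s => ((Φ s)⁻¹ *ᵥ b (y s) (u s)) i) := nice_mulVec nΨ nb
  set gv : ℝ → Fin n → ℝ := fun τ => ∫ s in (0:ℝ)..τ, (Φ s)⁻¹ *ᵥ b (y s) (u s) with hgvdef
  have hθs : ∀ s, thetaVec n k m b y u Φ s = Φ s *ᵥ gv s := fun s => rfl
  have hgva : ∀ τ ∈ Icc (0:ℝ) t, ∀ i, gv τ i
      = ∫ s in (0:ℝ)..τ, ((Φ s)⁻¹ *ᵥ b (y s) (u s)) i := fun τ hτ i =>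
    intervalIntegral_apply (niceVec_intervalIntegrable nh hI0 hτ) i
  have ngv : ∀ i, Nice t (fun τ => gv τ i) := by
    intro i
    have hint : IntegrableOn (fun s => ((Φ s)⁻¹ *ᵥ b (y s) (u s)) i) (uIcc 0 t) volume := by
      rw [uIcc_of_le ht]; exact (nh i).integrableOn
    have hcont := intervalIntegral.continuousOn_primitive_interval (a := (0:ℝ)) (b := t)
      (μ := volume) hint
    rw [uIcc_of_le ht] at hcont
    exact (nice_of_continuousOn hcont).congrOn fun τ hτ => (hgva τ hτ i).symm
  have nθ : ∀ i, Nice t (fun s => (Φ s *ᵥ gv s) i) := nice_mulVec nΦ ngv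
  have nAΦ : ∀ i j, Nice t (fun s => (A (y s) (u s) * Φ s) i j) := by
    intro i j
    refine Nice.congr (Nice.finsetSum Finset.univ fun l _ => (nA i l).mul (nΦ l j)) fun s => ?_
    rw [Matrix.mul_apply]
  have nΦx : ∀ i, Nice t (fun s => (Φ s *ᵥ x₀) i) :=
    nice_mulVec nΦ (fun _ => nice_const)
  have nAΦx : ∀ i, Nice t (fun s => (A (y s) (u s) *ᵥ (Φ s *ᵥ x₀)) i) := nice_mulVec nA nΦx
  have hmulmul : ∀ (M N : Matrix (Fin n) (Fin n) ℝ) (v : Fin n → ℝ) (i : Fin n),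
      ∑ j, (M * N) i j * v j = (M *ᵥ (N *ᵥ v)) i := by
    intro M N v i
    rw [Matrix.mulVec_mulVec]
    simp [Matrix.mulVec, dotProduct]
  have hΦid : ∀ τ ∈ Icc (0:ℝ) t, ∀ i, (Φ τ *ᵥ x₀) i
      = x₀ i + ∫ s in (0:ℝ)..τ, (A (y s) (u s) *ᵥ (Φ s *ᵥ x₀)) i := by
    intro τ hτ i
    have h1 : (Φ τ *ᵥ x₀) i = ∑ j, Φ τ i j * x₀ j := by simp [Matrix.mulVec, dotProduct]
    have h2 : ∀ j, Φ τ i j * x₀ j = (1 : Matrix (Fin n) (Fin n) ℝ) i j * x₀ j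
        + (∫ s in (0:ℝ)..τ, (A (y s) (u s) * Φ s) i j) * x₀ j := by
      intro j; rw [hΦeq τ i j]; ring
    rw [h1, Finset.sum_congr rfl fun j _ => h2 j, Finset.sum_add_distrib]
    have h3 : ∑ j, (1 : Matrix (Fin n) (Fin n) ℝ) i j * x₀ j = x₀ i := by
      simp [Matrix.one_apply]
    rw [h3]
    congr 1
    rw [Finset.sum_congr rfl fun j _ => (intervalIntegral.integral_mul_const (x₀ j) _).symm,
      ← intervalIntegral.integral_finset_sum (fun j _ =>
        ((nAΦ i j).mul nice_const).intervalIntegrable hI0 hτ)]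
    exact intervalIntegral.integral_congr fun s _ => hmulmul _ _ _ i
  have hθid : ∀ τ ∈ Icc (0:ℝ) t, ∀ i, (Φ τ *ᵥ gv τ) i
      = ∫ s in (0:ℝ)..τ, ((A (y s) (u s) *ᵥ (Φ s *ᵥ gv s)) i + b (y s) (u s) i) := by
    intro τ hτ i
    have hsub : Icc (0:ℝ) τ ⊆ Icc (0:ℝ) t := Icc_subset_Icc le_rfl hτ.2
    have hτ0 : (0:ℝ) ≤ τ := hτ.1
    have hu1 : uIcc (0:ℝ) τ = Icc 0 τ := uIcc_of_le hτ0
    have step : ∀ j : Fin n, Φ τ i j * gv τ j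
        = (∫ σ in (0:ℝ)..τ, Φ σ i j * ((Φ σ)⁻¹ *ᵥ b (y σ) (u σ)) j)
          + ∫ σ in (0:ℝ)..τ, (∫ s in σ..τ, (A (y s) (u s) * Φ s) i j)
              * ((Φ σ)⁻¹ *ᵥ b (y σ) (u σ)) j := by
      intro j
      have hint1 : IntervalIntegrable (fun σ => Φ σ i j * ((Φ σ)⁻¹ *ᵥ b (y σ) (u σ)) j)
          volume 0 τ := ((nΦ i j).mul (nh j)).intervalIntegrable hI0 hτ
      have hprim : ContinuousOn (fun σ => ∫ s in σ..τ, (A (y s) (u s) * Φ s) i j)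
          (Icc 0 τ) := by
        have hi2 : IntegrableOn (fun s => (A (y s) (u s) * Φ s) i j) (uIcc 0 τ) volume := by
          rw [hu1]; exact ((nAΦ i j).mono hsub).integrableOn
        have := intervalIntegral.continuousOn_primitive_interval_left (a := (0:ℝ)) (b := τ)
          (μ := volume) hi2
        rwa [hu1] at this
      have hint2 : IntervalIntegrable (fun σ =>
          (∫ s in σ..τ, (A (y s) (u s) * Φ s) i j) * ((Φ σ)⁻¹ *ᵥ b (y σ) (u σ)) j)
          volume 0 τ :=
        (Nice.mul (nice_of_continuousOn hprim) ((nh j).mono hsub)).intervalIntegrable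
          ⟨le_refl 0, hτ0⟩ ⟨hτ0, le_refl τ⟩
      have hΦdecomp : ∀ σ ∈ uIcc (0:ℝ) τ, Φ τ i j
          = Φ σ i j + ∫ s in σ..τ, (A (y s) (u s) * Φ s) i j := by
        intro σ hσ
        rw [hu1] at hσ
        have e := intervalIntegral.integral_interval_sub_left
          ((nAΦ i j).intervalIntegrable hI0 hτ) ((nAΦ i j).intervalIntegrable hI0 (hsub hσ))
        rw [hΦeq τ i j, hΦeq σ i j, ← e]
        ring
      calc Φ τ i j * gv τ j
          = ∫ σ in (0:ℝ)..τ, Φ τ i j * ((Φ σ)⁻¹ *ᵥ b (y σ) (u σ)) j := by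
            rw [hgva τ hτ j, intervalIntegral.integral_const_mul]
        _ = ∫ σ in (0:ℝ)..τ, (Φ σ i j * ((Φ σ)⁻¹ *ᵥ b (y σ) (u σ)) j
              + (∫ s in σ..τ, (A (y s) (u s) * Φ s) i j)
                * ((Φ σ)⁻¹ *ᵥ b (y σ) (u σ)) j) := by
            refine intervalIntegral.integral_congr fun σ hσ => ?_
            rw [hΦdecomp σ hσ]; ring
        _ = _ := intervalIntegral.integral_add hint1 hint2
    have fub : ∀ j : Fin n,
        (∫ σ in (0:ℝ)..τ, (∫ s in σ..τ, (A (y s) (u s) * Φ s) i j)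
            * ((Φ σ)⁻¹ *ᵥ b (y σ) (u σ)) j)
        = ∫ s in (0:ℝ)..τ, (A (y s) (u s) * Φ s) i j * gv s j := by
      intro j
      have h1 := fubini_triangle (kf := fun s => (A (y s) (u s) * Φ s) i j)
        (hf := fun σ => ((Φ σ)⁻¹ *ᵥ b (y σ) (u σ)) j) hτ0
        (((nAΦ i j).mono hsub).integrableOn.mono_set Ioc_subset_Icc_self)
        (((nh j).mono hsub).integrableOn.mono_set Ioc_subset_Icc_self)
      rw [h1]
      refine intervalIntegral.integral_congr fun s hs => ?_
      rw [hu1] at hs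
      rw [hgva s (hsub hs) j]
    have hΦh : ∀ σ ∈ uIcc (0:ℝ) τ, ∑ j, Φ σ i j * ((Φ σ)⁻¹ *ᵥ b (y σ) (u σ)) j
        = b (y σ) (u σ) i := by
      intro σ _
      have hh : ∑ j, Φ σ i j * ((Φ σ)⁻¹ *ᵥ b (y σ) (u σ)) j
          = (Φ σ *ᵥ ((Φ σ)⁻¹ *ᵥ b (y σ) (u σ))) i := by simp [Matrix.mulVec, dotProduct]
      rw [hh, Matrix.mulVec_mulVec, Matrix.mul_nonsing_inv _ (hΦdet σ), Matrix.one_mulVec]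
    have hL : (Φ τ *ᵥ gv τ) i = ∑ j, Φ τ i j * gv τ j := by simp [Matrix.mulVec, dotProduct]
    rw [hL, Finset.sum_congr rfl fun j _ => step j, Finset.sum_add_distrib,
      ← intervalIntegral.integral_finset_sum (fun j _ =>
        ((nΦ i j).mul (nh j)).intervalIntegrable hI0 hτ),
      Finset.sum_congr rfl fun j _ => fub j,
      ← intervalIntegral.integral_finset_sum (fun j _ =>
        ((nAΦ i j).mul (ngv j)).intervalIntegrable hI0 hτ),
      intervalIntegral.integral_congr (g := fun σ => b (y σ) (u σ) i) hΦh,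
      intervalIntegral.integral_congr (g := fun s => (A (y s) (u s) *ᵥ (Φ s *ᵥ gv s)) i)
        (fun s _ => hmulmul _ _ _ i),
      ← intervalIntegral.integral_add ((nb i).intervalIntegrable hI0 hτ)
        ((nice_mulVec nA nθ i).intervalIntegrable hI0 hτ)]
    exact intervalIntegral.integral_congr fun s _ => add_comm _ _
  have nAx : ∀ i, Nice t (fun s => (A (y s) (u s) *ᵥ x s) i) := nice_mulVec nA nx
  have nAθ : ∀ i, Nice t (fun s => (A (y s) (u s) *ᵥ (Φ s *ᵥ gv s)) i) := nice_mulVec nA nθ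
  set w : ℝ → Fin n → ℝ := fun s => x s - Φ s *ᵥ x₀ - Φ s *ᵥ gv s with hwdef
  have hwapp : ∀ s i0, w s i0 = x s i0 - (Φ s *ᵥ x₀) i0 - (Φ s *ᵥ gv s) i0 := by
    intro s i0; rw [hwdef]; simp
  have nw : ∀ i, Nice t (fun s => w s i) := fun i =>
    Nice.congr (((nx i).sub (nΦx i)).sub (nθ i)) fun s => (hwapp s i).symm
  have nAw : ∀ i, Nice t (fun s => (A (y s) (u s) *ᵥ w s) i) := nice_mulVec nA nw
  have hxcomp : ∀ τ ∈ Icc (0:ℝ) t, ∀ i, x τ i = x₀ i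
      + ∫ s in (0:ℝ)..τ, ((A (y s) (u s) *ᵥ x s) i + b (y s) (u s) i) := by
    intro τ hτ i
    have hII : IntervalIntegrable (fun s => A (y s) (u s) *ᵥ x s + b (y s) (u s))
        volume 0 τ := by
      refine niceVec_intervalIntegrable (fun i' => ?_) hI0 hτ
      exact Nice.congr ((nAx i').add (nb i')) fun s => by simp
    rw [hxeq τ hτ.1, hx0, Pi.add_apply]
    congr 1
    rw [intervalIntegral_apply hII i]
    exact intervalIntegral.integral_congr fun s _ => by simp
  have hw : ∀ τ ∈ Icc (0:ℝ) t, w τ = ∫ s in (0:ℝ)..τ, A (y s) (u s) *ᵥ w s := by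
    intro τ hτ
    funext i
    have hint1 : IntervalIntegrable
        (fun s => (A (y s) (u s) *ᵥ x s) i + b (y s) (u s) i) volume 0 τ :=
      ((nAx i).add (nb i)).intervalIntegrable hI0 hτ
    have hint2 : IntervalIntegrable (fun s => (A (y s) (u s) *ᵥ (Φ s *ᵥ x₀)) i) volume 0 τ :=
      (nAΦx i).intervalIntegrable hI0 hτ
    have hint3 : IntervalIntegrable
        (fun s => (A (y s) (u s) *ᵥ (Φ s *ᵥ gv s)) i + b (y s) (u s) i) volume 0 τ :=
      ((nAθ i).add (nb i)).intervalIntegrable hI0 hτ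
    have hR : (∫ s in (0:ℝ)..τ, A (y s) (u s) *ᵥ w s) i
        = ∫ s in (0:ℝ)..τ, (A (y s) (u s) *ᵥ w s) i :=
      intervalIntegral_apply (niceVec_intervalIntegrable nAw hI0 hτ) i
    rw [hR, hwapp τ i, hxcomp τ hτ i, hΦid τ hτ i, hθid τ hτ i]
    have hab : ∀ a b1 c d : ℝ, a + b1 - (a + c) - d = b1 - c - d := by intros; ring
    rw [hab, ← intervalIntegral.integral_sub hint1 hint2,
      ← intervalIntegral.integral_sub (hint1.sub hint2) hint3]
    refine intervalIntegral.integral_congr fun s _ => ?_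
    have hws : (A (y s) (u s) *ᵥ w s) i
        = (A (y s) (u s) *ᵥ x s) i - (A (y s) (u s) *ᵥ (Φ s *ᵥ x₀)) i
          - (A (y s) (u s) *ᵥ (Φ s *ᵥ gv s)) i := by
      rw [hwdef]
      simp [Matrix.mulVec_sub]
    rw [hws]; ring
  obtain ⟨Bw, hBw⟩ := nice_norm_bound nw
  set MA : ℝ := (n : ℝ) * max CA 0 with hMAdef
  have hMA : 0 ≤ MA := by positivity
  have hAwb : ∀ s ∈ Icc (0:ℝ) t, ‖A (y s) (u s) *ᵥ w s‖ ≤ MA * ‖w s‖ := by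
    intro s hs
    have h0 : (0:ℝ) ≤ MA * ‖w s‖ := mul_nonneg hMA (norm_nonneg _)
    refine (pi_norm_le_iff_of_nonneg h0).2 fun i => ?_
    have h1 : (A (y s) (u s) *ᵥ w s) i = ∑ j, A (y s) (u s) i j * w s j := by
      simp [Matrix.mulVec, dotProduct]
    rw [h1]
    calc ‖∑ j, A (y s) (u s) i j * w s j‖ ≤ ∑ j, ‖A (y s) (u s) i j * w s j‖ :=
          norm_sum_le _ _
      _ ≤ ∑ _j : Fin n, max CA 0 * ‖w s‖ := by
          refine Finset.sum_le_sum fun j _ => ?_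
          rw [norm_mul]
          refine mul_le_mul ?_ (norm_le_pi_norm _ j) (norm_nonneg _) (le_max_right CA 0)
          have := (hAij s i j).trans (hCAb s hs)
          calc ‖A (y s) (u s) i j‖ = |A (y s) (u s) i j| := Real.norm_eq_abs _
            _ ≤ CA := this
            _ ≤ max CA 0 := le_max_left _ _
      _ = MA * ‖w s‖ := by
          rw [Finset.sum_const, Finset.card_univ, Fintype.card_fin, nsmul_eq_mul, hMAdef]
          ring
  have hwzero : ∀ s ∈ Icc (0:ℝ) t, w s = 0 :=
    gronwall_zero w (fun s => A (y s) (u s) *ᵥ w s) t MA Bw hMA hw hBw hAwb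
  have nCx : ∀ i, Nice t (fun s => (Cm (y s) *ᵥ x s) i) := nice_mulVec nC nx
  have nCθ : ∀ i, Nice t (fun s => (Cm (y s) *ᵥ (Φ s *ᵥ gv s)) i) := nice_mulVec nC nθ
  funext i
  have hpv : pvec n k m b Cm f y u Φ t i
      = y t i - y 0 i - (∫ s in (0:ℝ)..t, f (y s) (u s)) i
        - (∫ s in (0:ℝ)..t, Cm (y s) *ᵥ thetaVec n k m b y u Φ s) i := by
    simp only [pvec, Pi.sub_apply]
  have hθint : IntervalIntegrable (fun s => Cm (y s) *ᵥ thetaVec n k m b y u Φ s)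
      volume 0 t := by
    refine niceVec_intervalIntegrable (fun i' => ?_) hI0 htI
    exact Nice.congr (nCθ i') fun s => by rw [hθs s]
  have hfint : IntervalIntegrable (fun s => f (y s) (u s)) volume 0 t :=
    niceVec_intervalIntegrable nf hI0 htI
  have hyint : IntervalIntegrable (fun s => f (y s) (u s) + Cm (y s) *ᵥ x s) volume 0 t := by
    refine niceVec_intervalIntegrable (fun i' => ?_) hI0 htI
    exact Nice.congr ((nf i').add (nCx i')) fun s => by simp
  have hystep : y t i - y 0 i
      = ∫ s in (0:ℝ)..t, (f (y s) (u s) i + (Cm (y s) *ᵥ x s) i) := by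
    rw [hyeq t ht, Pi.add_apply]
    have : (∫ s in (0:ℝ)..t, (f (y s) (u s) + Cm (y s) *ᵥ x s)) i
        = ∫ s in (0:ℝ)..t, (f (y s) (u s) i + (Cm (y s) *ᵥ x s) i) := by
      rw [intervalIntegral_apply hyint i]
      exact intervalIntegral.integral_congr fun s _ => by simp
    rw [this]; ring
  have hfapp : (∫ s in (0:ℝ)..t, f (y s) (u s)) i = ∫ s in (0:ℝ)..t, f (y s) (u s) i :=
    intervalIntegral_apply hfint i
  have hθapp : (∫ s in (0:ℝ)..t, Cm (y s) *ᵥ thetaVec n k m b y u Φ s) i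
      = ∫ s in (0:ℝ)..t, (Cm (y s) *ᵥ (Φ s *ᵥ gv s)) i := by
    rw [intervalIntegral_apply hθint i]
    exact intervalIntegral.integral_congr fun s _ => by rw [hθs s]
  have hsplit : (∫ s in (0:ℝ)..t, (f (y s) (u s) i + (Cm (y s) *ᵥ x s) i))
      = (∫ s in (0:ℝ)..t, f (y s) (u s) i) + ∫ s in (0:ℝ)..t, (Cm (y s) *ᵥ x s) i :=
    intervalIntegral.integral_add ((nf i).intervalIntegrable hI0 htI)
      ((nCx i).intervalIntegrable hI0 htI)
  have hkey : (∫ s in (0:ℝ)..t, (Cm (y s) *ᵥ x s) i)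
      - (∫ s in (0:ℝ)..t, (Cm (y s) *ᵥ (Φ s *ᵥ gv s)) i)
      = ∫ s in (0:ℝ)..t, (Cm (y s) *ᵥ (Φ s *ᵥ x₀)) i := by
    rw [← intervalIntegral.integral_sub ((nCx i).intervalIntegrable hI0 htI)
      ((nCθ i).intervalIntegrable hI0 htI)]
    refine intervalIntegral.integral_congr fun s hs => ?_
    rw [uIcc_of_le ht] at hs
    have hxs : ∀ i0, x s i0 = (Φ s *ᵥ x₀) i0 + (Φ s *ᵥ gv s) i0 := by
      intro i0
      have hz := congrFun (hwzero s hs) i0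
      rw [hwapp s i0] at hz
      simp only [Pi.zero_apply] at hz
      linarith
    simp only [Matrix.mulVec, dotProduct]
    rw [← Finset.sum_sub_distrib]
    refine Finset.sum_congr rfl fun j _ => ?_
    rw [hxs j]
    simp only [Matrix.mulVec, dotProduct]
    ring
  have hq : ((qmat n k Cm y Φ t)ᵀ *ᵥ x₀) i
      = ∫ s in (0:ℝ)..t, (Cm (y s) *ᵥ (Φ s *ᵥ x₀)) i := by
    have h1 : ((qmat n k Cm y Φ t)ᵀ *ᵥ x₀) i
        = ∑ j, (∫ s in (0:ℝ)..t, ((Φ s)ᵀ * (Cm (y s))ᵀ) j i) * x₀ j := by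
      simp [qmat, Matrix.mulVec, dotProduct, Matrix.transpose_apply, Matrix.of_apply]
    have nq : ∀ j : Fin n, Nice t (fun s => ((Φ s)ᵀ * (Cm (y s))ᵀ) j i) := by
      intro j
      refine Nice.congr (Nice.finsetSum Finset.univ fun l _ => (nΦ l j).mul (nC i l))
        fun s => ?_
      rw [Matrix.mul_apply]
      simp [Matrix.transpose_apply]
    rw [h1, Finset.sum_congr rfl fun j _ => (intervalIntegral.integral_mul_const (x₀ j) _).symm,
      ← intervalIntegral.integral_finset_sum (fun j _ =>
        ((nq j).mul nice_const).intervalIntegrable hI0 htI)]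
    refine intervalIntegral.integral_congr fun s _ => ?_
    simp only [Matrix.mul_apply, Matrix.mulVec, dotProduct, Matrix.transpose_apply,
      Finset.sum_mul]
    rw [Finset.sum_comm]
    refine Finset.sum_congr rfl fun l _ => ?_
    rw [Finset.mul_sum]
    refine Finset.sum_congr rfl fun j _ => ?_
    ring
  rw [hpv, hfapp, hθapp, hystep, hsplit, hq, ← hkey]
  ring
end
end

section
/- For system (1.1), if the input u ∈ L^∞([0,r];U) strongly distinguishes the state (x₀,y₀) ∈ O in time r > 0, so that the matrix Q(r,x₀,y₀;u) = ∫₀^r q(t) q'(t) dt is positive definite, then the initial state is recovered by the explicit formula x₀ = Q⁻¹(r,x₀,y₀;u) ∫₀^r q(t,x₀,y₀;u) p(t,x₀,y₀;u) dt. -/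
set_option maxHeartbeats 1600000


open MeasureTheory Matrix Set intervalIntegral Filter

noncomputable section

theorem aux_measurable_comp {E F : Type*} [TopologicalSpace E] [MeasurableSpace E]
    [OpensMeasurableSpace E] [TopologicalSpace F] [MeasurableSpace F] [BorelSpace F]
    {S : Set E} {g : E → F} (hg : ContinuousOn g S) {α : Type*} [MeasurableSpace α]
    {p : α → E} (hp : Measurable p) (hmem : ∀ s, p s ∈ S) :
    Measurable fun s => g (p s) := by
  have h1 : Measurable fun s => (⟨p s, hmem s⟩ : S) := hp.subtype_mk
  have h2 : Continuous (S.restrict g) := continuousOn_iff_continuous_restrict.mp hg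
  exact h2.measurable.comp h1

theorem aux_norm_mulVec_le {a b : ℕ} (M : Matrix (Fin a) (Fin b) ℝ) (w : Fin b → ℝ)
    {C : ℝ} (hC : 0 ≤ C) (hM : ∀ i j, |M i j| ≤ C) :
    ‖M *ᵥ w‖ ≤ b * C * ‖w‖ := by
  have hb : (0:ℝ) ≤ b * C * ‖w‖ := by positivity
  rw [pi_norm_le_iff_of_nonneg hb]
  intro i
  calc ‖(M *ᵥ w) i‖ = |∑ j, M i j * w j| := rfl
    _ ≤ ∑ j, |M i j * w j| := Finset.abs_sum_le_sum_abs _ _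
    _ ≤ ∑ _j : Fin b, C * ‖w‖ := by
        refine Finset.sum_le_sum fun j _ => ?_
        rw [abs_mul]
        exact mul_le_mul (hM i j) (norm_le_pi_norm w j) (abs_nonneg _) hC
    _ = b * C * ‖w‖ := by simp [mul_assoc]

theorem aux_measurable_mulVec {α : Type*} [MeasurableSpace α] {a b : ℕ}
    {M : α → Matrix (Fin a) (Fin b) ℝ} {w : α → Fin b → ℝ}
    (hM : ∀ i j, Measurable fun s => M s i j) (hw : Measurable w) :
    Measurable fun s => M s *ᵥ w s := by
  refine measurable_pi_lambda _ fun i => ?_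
  show Measurable fun s => ∑ j, M s i j * w s j
  exact Finset.measurable_sum _ fun j _ => (hM i j).mul (hw.eval (a := j))

/-- measurable + bounded on `[a,b]` implies interval integrable. -/
theorem aux_intInt {E : Type*} [NormedAddCommGroup E] {F : ℝ → E} {a b : ℝ}
    (hF : AEStronglyMeasurable F (volume.restrict (Set.Ioc a b)))
    (hab : a ≤ b) {C : ℝ} (hbd : ∀ s ∈ Icc a b, ‖F s‖ ≤ C) :
    IntervalIntegrable F volume a b := by
  rw [intervalIntegrable_iff_integrableOn_Ioc_of_le hab]
  refine ⟨hF, HasFiniteIntegral.of_bounded (C := C) ?_⟩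
  filter_upwards [ae_restrict_mem measurableSet_Ioc] with s hs
  exact hbd s ⟨hs.1.le, hs.2⟩

theorem aux_intInt_comp {E F : Type*} [NormedAddCommGroup E] [NormedSpace ℝ E]
    [NormedAddCommGroup F] [NormedSpace ℝ F] (L : E →L[ℝ] F) {f : ℝ → E} {a b : ℝ}
    (hf : IntervalIntegrable f volume a b) :
    IntervalIntegrable (fun s => L (f s)) volume a b :=
  ⟨L.integrable_comp hf.1, L.integrable_comp hf.2⟩

theorem aux_pi_apply {ι : Type*} [Fintype ι] {f : ℝ → ι → ℝ} {a b : ℝ}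
    (hf : IntervalIntegrable f volume a b) (i : ι) :
    (∫ s in a..b, f s) i = ∫ s in a..b, f s i := by
  have := (ContinuousLinearMap.proj (R := ℝ) (φ := fun _ : ι => ℝ) i).intervalIntegral_comp_comm hf
  simpa using this.symm

/-- `mulVec` as a continuous linear map in the vector argument. -/
def mulVecCLM {a b : ℕ} (M : Matrix (Fin a) (Fin b) ℝ) : (Fin b → ℝ) →L[ℝ] (Fin a → ℝ) :=
  LinearMap.toContinuousLinearMap M.mulVecLin

@[simp] theorem mulVecCLM_apply {a b : ℕ} (M : Matrix (Fin a) (Fin b) ℝ) (w : Fin b → ℝ) :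
    mulVecCLM M w = M *ᵥ w := rfl

theorem aux_mulVec_integral {a b : ℕ} (M : Matrix (Fin a) (Fin b) ℝ) {f : ℝ → Fin b → ℝ}
    {c d : ℝ} (hf : IntervalIntegrable f volume c d) :
    M *ᵥ (∫ s in c..d, f s) = ∫ s in c..d, M *ᵥ f s := by
  have := (mulVecCLM M).intervalIntegral_comp_comm hf
  simpa using this.symm

/-- Grönwall, integral form. -/
theorem aux_gronwall {g : ℝ → ℝ} {c T : ℝ} (hc : 0 ≤ c) (hT : 0 ≤ T)
    (hgc : ContinuousOn g (Icc 0 T)) (hgn : ∀ t ∈ Icc 0 T, 0 ≤ g t)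
    (hle : ∀ t ∈ Icc 0 T, g t ≤ c * ∫ s in (0:ℝ)..t, g s) :
    ∀ t ∈ Icc 0 T, g t = 0 := by
  set gg : ℝ → ℝ := fun s => g (min (max s 0) T) with hgg
  have hclamp : Continuous fun s : ℝ => min (max s 0) T :=
    (continuous_id.max continuous_const).min continuous_const
  have hmem : ∀ s : ℝ, min (max s 0) T ∈ Icc 0 T := fun s =>
    ⟨le_min (le_max_right _ _) hT, min_le_right _ _⟩
  have hggc : Continuous gg := hgc.comp_continuous hclamp hmem
  have hggeq : ∀ s ∈ Icc (0:ℝ) T, gg s = g s := by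
    intro s hs
    simp [hgg, max_eq_left hs.1, min_eq_left hs.2]
  have hggn : ∀ s, 0 ≤ gg s := fun s => hgn _ (hmem s)
  set h : ℝ → ℝ := fun t => ∫ s in (0:ℝ)..t, gg s with hh
  have hhd : ∀ t : ℝ, HasDerivAt h (gg t) t := by
    intro t
    exact intervalIntegral.integral_hasDerivAt_right
      (hggc.intervalIntegrable _ _)
      hggc.stronglyMeasurable.stronglyMeasurableAtFilter
      hggc.continuousAt
  have hint : ∀ t ∈ Icc (0:ℝ) T, (∫ s in (0:ℝ)..t, g s) = h t := by
    intro t ht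
    refine intervalIntegral.integral_congr fun s hs => ?_
    rw [uIcc_of_le ht.1] at hs
    exact (hggeq s ⟨hs.1, hs.2.trans ht.2⟩).symm
  set E : ℝ → ℝ := fun t => Real.exp (-(c * t)) * h t with hE
  have hEd : ∀ t : ℝ, HasDerivAt E (Real.exp (-(c * t)) * (-c) * h t
      + Real.exp (-(c * t)) * gg t) t := by
    intro t
    have h1 : HasDerivAt (fun t : ℝ => -(c * t)) (-c) t := by
      have h := ((hasDerivAt_id t).const_mul c).neg
      simp only [mul_one] at h
      exact h
    exact (h1.exp.mul (hhd t))
  have hderiv : ∀ t ∈ Ioo (0:ℝ) T, deriv E t ≤ 0 := by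
    intro t ht
    rw [(hEd t).deriv]
    have ht' : t ∈ Icc (0:ℝ) T := ⟨ht.1.le, ht.2.le⟩
    have h2 : gg t ≤ c * h t := by
      rw [hggeq t ht']
      calc g t ≤ c * ∫ s in (0:ℝ)..t, g s := hle t ht'
        _ = c * h t := by rw [hint t ht']
    nlinarith [Real.exp_pos (-(c * t)), hggn t]
  have hanti : AntitoneOn E (Icc 0 T) := by
    refine antitoneOn_of_deriv_nonpos (convex_Icc 0 T) ?_ ?_ ?_
    · exact Continuous.continuousOn (by fun_prop)
    · intro t _
      exact (hEd t).differentiableAt.differentiableWithinAt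
    · intro t ht
      rw [interior_Icc] at ht
      exact hderiv t ht
  intro t ht
  have hE0 : E 0 = 0 := by simp [hE, hh]
  have hEt : E t ≤ 0 := by
    rw [← hE0]
    exact hanti ⟨le_rfl, hT⟩ ht ht.1
  have hht : 0 ≤ h t := intervalIntegral.integral_nonneg ht.1 fun s _ => hggn s
  have hht0 : h t = 0 := by
    by_contra hne
    have hpos : 0 < h t := lt_of_le_of_ne hht (Ne.symm hne)
    have h2 : 0 < Real.exp (-(c * t)) * h t := mul_pos (Real.exp_pos _) hpos
    have h1 : Real.exp (-(c * t)) * h t ≤ 0 := hEt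
    linarith
  have := hle t ht
  rw [hint t ht, hht0, mul_zero] at this
  exact le_antisymm this (hgn t ht)

/-- gluing continuity for piecewise definitions at `r`. -/
theorem aux_glue_cont {E : Type*} [TopologicalSpace E] {f g : ℝ → E} {r : ℝ} (hr : 0 ≤ r)
    (hf : ContinuousOn f (Ici 0)) (hg : ContinuousOn g (Ici r)) (hfg : f r = g r) :
    ContinuousOn (fun t => if t ≤ r then f t else g t) (Ici 0) := by
  intro z hz
  rcases lt_trichotomy z r with h | h | h
  · have hev : ∀ᶠ t in nhdsWithin z (Ici 0), (if t ≤ r then f t else g t) = f t := by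
      filter_upwards [nhdsWithin_le_nhds (Iio_mem_nhds h)] with t ht
      have : t ≤ r := le_of_lt ht
      simp [this]
    exact ((hf z hz).congr_of_eventuallyEq hev (by simp [le_of_lt h]))
  · subst h
    have h1 : ContinuousWithinAt (fun t => if t ≤ z then f t else g t) (Icc 0 z) z := by
      refine ((hf z hz).mono Icc_subset_Ici_self).congr (fun t ht => by simp [ht.2]) (by simp)
    have h2 : ContinuousWithinAt (fun t => if t ≤ z then f t else g t) (Ici z) z := by
      refine ((hg z (mem_Ici.mpr le_rfl)).congr (fun t ht => ?_) (by simp [hfg]))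
      rcases eq_or_lt_of_le (mem_Ici.mp ht) with h' | h'
      · simp [← h', hfg]
      · simp [not_le.mpr h']
    have := h1.union h2
    refine this.mono fun t ht => ?_
    rcases le_or_gt t z with h' | h'
    · exact Or.inl ⟨ht, h'⟩
    · exact Or.inr h'.le
  · have hz' : ContinuousAt g z := by
      have : Ici r ∈ nhds z := Ici_mem_nhds h
      exact (hg z (le_of_lt h)).continuousAt this
    have hev : ∀ᶠ t in nhds z, (if t ≤ r then f t else g t) = g t := by
      filter_upwards [Ioi_mem_nhds h] with t ht
      simp [not_le.mpr (show r < t from ht)]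
    have : ContinuousAt (fun t => if t ≤ r then f t else g t) z := by
      refine hz'.congr ?_
      filter_upwards [hev] with t ht
      exact ht.symm
    exact this.continuousWithinAt

/-- triangle Fubini for a product integrand. -/
theorem aux_fubini {p n : ℕ} {N : ℝ → Matrix (Fin p) (Fin n) ℝ} {ψ : ℝ → Fin n → ℝ} {t : ℝ}
    (ht : 0 ≤ t) (hNm : ∀ i j, Measurable fun s => N s i j) (hψm : Measurable ψ)
    {CN Cψ : ℝ} (hCN : 0 ≤ CN) (hCψ : 0 ≤ Cψ)
    (hNb : ∀ s ∈ Icc (0:ℝ) t, ∀ i j, |N s i j| ≤ CN)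
    (hψb : ∀ s ∈ Icc (0:ℝ) t, ‖ψ s‖ ≤ Cψ) :
    (∫ s in (0:ℝ)..t, N s *ᵥ (∫ τ in (0:ℝ)..s, ψ τ)) =
      ∫ τ in (0:ℝ)..t, (∫ s in τ..t, N s *ᵥ ψ τ) := by
  classical
  set B : ℝ × ℝ → (Fin p → ℝ) := fun q => N q.1 *ᵥ ψ q.2 with hB
  have hBm : Measurable B :=
    aux_measurable_mulVec (fun i j => (hNm i j).comp measurable_fst) (hψm.comp measurable_snd)
  set F : ℝ × ℝ → (Fin p → ℝ) := fun q => if q.2 ≤ q.1 then B q else 0 with hF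
  have hFm : Measurable F := by
    have hset : MeasurableSet {q : ℝ × ℝ | q.2 ≤ q.1} := measurableSet_le measurable_snd measurable_fst
    have : F = {q : ℝ × ℝ | q.2 ≤ q.1}.indicator B := by
      ext q i <;> by_cases h : q.2 ≤ q.1 <;> simp [hF, h, Set.indicator_apply]
    rw [this]
    exact hBm.indicator hset
  have hψint : IntegrableOn ψ (Ioc 0 t) volume := by
    refine ⟨(hψm.aestronglyMeasurable).restrict, HasFiniteIntegral.of_bounded (C := Cψ) ?_⟩
    filter_upwards [ae_restrict_mem measurableSet_Ioc] with s hs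
    exact hψb s ⟨hs.1.le, hs.2⟩
  -- integrability of F on the square
  have hFint : Integrable F ((volume.restrict (Ioc 0 t)).prod (volume.restrict (Ioc 0 t))) := by
    rw [Measure.prod_restrict]
    refine Measure.integrableOn_of_bounded (M := ↑n * CN * Cψ) ?_ hFm.aestronglyMeasurable ?_
    · rw [Measure.prod_prod]
      exact ENNReal.mul_ne_top (by simp) (by simp)
    · filter_upwards [ae_restrict_mem (measurableSet_Ioc.prod measurableSet_Ioc)] with q hq
      by_cases h : q.2 ≤ q.1
      · simp only [hF, if_pos h]
        exact aux_norm_mulVec_le _ _ hCN (fun i j => hNb q.1 ⟨hq.1.1.le, hq.1.2⟩ i j) |>.trans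
          (by
            have := hψb q.2 ⟨hq.2.1.le, hq.2.2⟩
            have h0 : (0:ℝ) ≤ ↑n * CN := by positivity
            nlinarith [norm_nonneg (ψ q.2)])
      · simp only [hF, if_neg h]
        simp only [norm_zero]
        positivity
  -- rewrite LHS
  have hL : (∫ s in (0:ℝ)..t, N s *ᵥ (∫ τ in (0:ℝ)..s, ψ τ)) =
      ∫ s in Ioc (0:ℝ) t, (∫ τ in Ioc (0:ℝ) t, F (s, τ)) := by
    rw [intervalIntegral.integral_of_le ht]
    refine setIntegral_congr_fun measurableSet_Ioc (fun s hs => ?_)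
    have hs0 : (0:ℝ) ≤ s := hs.1.le
    have hinner : (∫ τ in (0:ℝ)..s, ψ τ) = ∫ τ in Ioc (0:ℝ) t, (Iic s).indicator ψ τ := by
      rw [intervalIntegral.integral_of_le hs0, MeasureTheory.integral_indicator measurableSet_Iic,
        Measure.restrict_restrict measurableSet_Iic]
      congr 1
      refine congrArg _ (Set.ext fun τ => ?_)
      simp only [mem_inter_iff, mem_Iic, mem_Ioc]
      constructor
      · rintro ⟨h1, h2⟩
        exact ⟨h2, h1, h2.trans hs.2⟩
      · rintro ⟨h1, h2, h3⟩
        exact ⟨h2, h1⟩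
    rw [hinner]
    have hindint : Integrable ((Iic s).indicator ψ) (volume.restrict (Ioc 0 t)) :=
      hψint.indicator measurableSet_Iic
    have := ((mulVecCLM (N s)).integral_comp_comm hindint).symm
    simp only [mulVecCLM_apply] at this
    rw [this]
    refine setIntegral_congr_fun measurableSet_Ioc (fun τ hτ => ?_)
    by_cases h : τ ≤ s
    · simp [hF, hB, h, Set.indicator_apply, mem_Iic]
    · simp [hF, hB, h, Set.indicator_apply, mem_Iic, Matrix.mulVec_zero]
  rw [hL]
  have hswap := MeasureTheory.integral_integral_swap (f := fun s τ => F (s, τ)) hFint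
  rw [hswap]
  -- rewrite RHS
  rw [intervalIntegral.integral_of_le ht]
  refine setIntegral_congr_fun measurableSet_Ioc (fun τ hτ => ?_)
  have h1 : (fun s => F (s, τ)) = (Ici τ).indicator (fun s => N s *ᵥ ψ τ) := by
    ext s i <;> by_cases h : τ ≤ s <;> simp [hF, hB, h, Set.indicator_apply, mem_Ici]
  rw [h1, MeasureTheory.integral_indicator measurableSet_Ici, Measure.restrict_restrict measurableSet_Ici]
  have h2 : Ici τ ∩ Ioc 0 t = Icc τ t := by
    refine Set.ext fun s => ?_
    simp only [mem_inter_iff, mem_Ici, mem_Ioc, mem_Icc]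
    constructor
    · rintro ⟨ha, hb, hc⟩
      exact ⟨ha, hc⟩
    · rintro ⟨ha, hb⟩
      exact ⟨ha, ⟨lt_of_lt_of_le hτ.1 ha, hb⟩⟩
  rw [h2, integral_Icc_eq_integral_Ioc, intervalIntegral.integral_of_le hτ.2]

theorem aux_locLip_contOn {α β : Type*} [PseudoMetricSpace α] [PseudoMetricSpace β]
    {s : Set α} {g : α → β} (h : ∀ z ∈ s, ∃ K : NNReal, ∃ t ∈ nhdsWithin z s, LipschitzOnWith K g t) :
    ContinuousOn g s := by
  intro z hz
  obtain ⟨K, t, ht, hK⟩ := h z hz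
  have hzt : z ∈ t := by
    obtain ⟨U, hU, hzU, hsub⟩ := mem_nhdsWithin.mp ht
    exact hsub ⟨hzU, hz⟩
  exact (hK.continuousOn z hzt).mono_of_mem_nhdsWithin ht

/-- clamped composition along the trajectory: measurable representative with bounds. -/
theorem aux_coeff {k m : ℕ} {E : Type*} [NormedAddCommGroup E] [MeasurableSpace E]
    [BorelSpace E] {Om : Set (Fin k → ℝ)} {U : Set (Fin m → ℝ)} (hUcl : IsClosed U)
    {g : (Fin k → ℝ) × (Fin m → ℝ) → E} (hg : ContinuousOn g (Om ×ˢ U))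
    {y : ℝ → Fin k → ℝ} (hy : ContinuousOn y (Ici 0)) (hyO : ∀ t, 0 ≤ t → y t ∈ Om)
    {u : ℝ → Fin m → ℝ} (hu : Measurable u) (huU : ∀ t, 0 ≤ t → u t ∈ U)
    (hub : ∀ T : ℝ, ∃ M : ℝ, ∀ t ∈ Icc (0:ℝ) T, ‖u t‖ ≤ M) :
    ∃ G : ℝ → E, Measurable G ∧ (∀ t, 0 ≤ t → G t = g (y t, u t)) ∧
      ∀ T : ℝ, ∃ C : ℝ, ∀ t ∈ Icc (0:ℝ) T, ‖G t‖ ≤ C := by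
  have hclamp : Continuous fun s : ℝ => max s 0 := continuous_id.max continuous_const
  have hclmem : ∀ s : ℝ, max s 0 ∈ Ici (0:ℝ) := fun s => mem_Ici.mpr (le_max_right _ _)
  set yc : ℝ → Fin k → ℝ := fun s => y (max s 0) with hyc
  set uc : ℝ → Fin m → ℝ := fun s => u (max s 0) with huc
  have hycc : Continuous yc := hy.comp_continuous hclamp hclmem
  have hucm : Measurable uc := hu.comp (measurable_id.max measurable_const)
  refine ⟨fun s => g (yc s, uc s), ?_, ?_, ?_⟩
  · refine aux_measurable_comp hg ?_ ?_
    · exact hycc.measurable.prodMk hucm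
    · exact fun s => ⟨hyO _ (hclmem s), huU _ (hclmem s)⟩
  · intro t ht
    simp [hyc, huc, max_eq_left ht]
  · intro T
    rcases le_or_gt 0 T with hT | hT
    · obtain ⟨Mu, hMu⟩ := hub T
      have hMu0 : 0 ≤ Mu := le_trans (norm_nonneg _) (hMu 0 ⟨le_rfl, hT⟩)
      set K : Set ((Fin k → ℝ) × (Fin m → ℝ)) :=
        (y '' Icc 0 T) ×ˢ (U ∩ Metric.closedBall 0 Mu) with hK
      have hKc : IsCompact K := by
        refine IsCompact.prod ?_ ?_
        · exact (isCompact_Icc).image_of_continuousOn (hy.mono Icc_subset_Ici_self)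
        · exact (isCompact_closedBall 0 Mu).inter_left hUcl
      have hKsub : K ⊆ Om ×ˢ U := by
        rintro ⟨a, b⟩ ⟨⟨t, ht, rfl⟩, hb⟩
        exact ⟨hyO t ht.1, hb.1⟩
      obtain ⟨C, hC⟩ := hKc.exists_bound_of_continuousOn (hg.mono hKsub)
      refine ⟨C, fun t ht => ?_⟩
      have ht0 : max t 0 = t := max_eq_left ht.1
      refine hC _ ⟨⟨t, ht, by rw [hyc]; simp [ht0]⟩, ?_⟩
      constructor
      · show uc t ∈ U
        simp only [huc, ht0]
        exact huU t ht.1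
      · show uc t ∈ Metric.closedBall 0 Mu
        simp only [huc, ht0, Metric.mem_closedBall, dist_zero_right]
        exact hMu t ht
    · exact ⟨0, fun t ht => absurd (ht.1.trans ht.2) (not_le.mpr hT)⟩

theorem aux_primitive_contOn {ψ : ℝ → Fin n → ℝ}
    (hloc : ∀ T : ℝ, 0 ≤ T → IntegrableOn ψ (Icc 0 T) volume) :
    ContinuousOn (fun t => ∫ s in (0:ℝ)..t, ψ s) (Ici 0) := by
  intro t ht
  have hT1 : (0:ℝ) ≤ t + 1 := by linarith [mem_Ici.mp ht]
  have h1 := intervalIntegral.continuousOn_primitive_interval (μ := volume)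
    (a := 0) (b := t + 1) (f := ψ) (by rw [uIcc_of_le hT1]; exact hloc (t+1) hT1)
  have h2 : ContinuousWithinAt (fun t => ∫ s in (0:ℝ)..t, ψ s) (uIcc 0 (t+1)) t := by
    refine h1 t ?_
    rw [uIcc_of_le hT1]
    exact ⟨ht, by linarith⟩
  refine h2.mono_of_mem_nhdsWithin ?_
  rw [uIcc_of_le hT1]
  refine mem_nhdsWithin.mpr ⟨Iio (t + 1), isOpen_Iio, by simp, fun z hz => ⟨hz.2, le_of_lt hz.1⟩⟩

theorem aux_entbound {a b : ℕ} (M : ℝ → Matrix (Fin a) (Fin b) ℝ)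
    (hM : ∀ i j, Continuous fun t => M t i j) (T : ℝ) :
    ∃ C, 0 ≤ C ∧ ∀ t ∈ Icc (0:ℝ) T, ∀ i j, |M t i j| ≤ C := by
  set P : ℝ → (Fin a → Fin b → ℝ) := fun t i j => M t i j with hP
  have hPc : Continuous P := continuous_pi fun i => continuous_pi fun j => hM i j
  obtain ⟨C, hC⟩ := isCompact_Icc.exists_bound_of_continuousOn
    (s := Icc (0:ℝ) T) hPc.continuousOn
  refine ⟨max C 0, le_max_right _ _, fun t ht i j => ?_⟩
  calc |M t i j| = ‖P t i j‖ := rfl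
    _ ≤ ‖P t i‖ := norm_le_pi_norm (P t i) j
    _ ≤ ‖P t‖ := norm_le_pi_norm (P t) i
    _ ≤ max C 0 := (hC t ht).trans (le_max_left _ _)

theorem aux_cbound {q : ℕ} (F : ℝ → Fin q → ℝ) (hF : Continuous F) (T : ℝ) :
    ∃ C, 0 ≤ C ∧ ∀ s ∈ Icc (0:ℝ) T, ‖F s‖ ≤ C := by
  obtain ⟨C, hC⟩ := isCompact_Icc.exists_bound_of_continuousOn
    (s := Icc (0:ℝ) T) hF.continuousOn
  exact ⟨max C 0, le_max_right _ _, fun s hs => (hC s hs).trans (le_max_left _ _)⟩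

theorem aux_trajint {E : Type*} [NormedAddCommGroup E] [MeasurableSpace E] [BorelSpace E]
    [SecondCountableTopology E] {F Fc : ℝ → E}
    (hFc : Measurable Fc) (hb : ∀ T : ℝ, ∃ C : ℝ, ∀ s ∈ Icc (0:ℝ) T, ‖Fc s‖ ≤ C)
    (heq : ∀ s, 0 ≤ s → F s = Fc s) {a b : ℝ} (ha : 0 ≤ a) (hab : a ≤ b) :
    IntervalIntegrable F volume a b := by
  obtain ⟨C, hC⟩ := hb b
  have h1 : IntervalIntegrable Fc volume a b :=
    aux_intInt hFc.aestronglyMeasurable.restrict hab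
      (C := C) (fun s hs => hC s ⟨ha.trans hs.1, hs.2⟩)
  rw [intervalIntegrable_iff_integrableOn_Ioc_of_le hab] at h1 ⊢
  refine h1.congr_fun (fun s hs => (heq s (ha.trans hs.1.le)).symm) measurableSet_Ioc

theorem aux_phiv {n : ℕ} {At Φ : ℝ → Matrix (Fin n) (Fin n) ℝ}
    (hAm : ∀ i j, Measurable fun s => At s i j)
    (hAb : ∀ T : ℝ, ∃ C, 0 ≤ C ∧ ∀ t ∈ Icc (0:ℝ) T, ∀ i j, |At t i j| ≤ C)
    (hΦc : ∀ i j, Continuous fun t => Φ t i j)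
    (hΦeq : ∀ (t : ℝ), 0 ≤ t → ∀ (i j : Fin n), Φ t i j =
      (1 : Matrix (Fin n) (Fin n) ℝ) i j + ∫ s in (0:ℝ)..t, (At s * Φ s) i j)
    (c : Fin n → ℝ) :
    ∀ t, 0 ≤ t → Φ t *ᵥ c = c + ∫ s in (0:ℝ)..t, (At s * Φ s) *ᵥ c := by
  intro t ht
  have hNm : ∀ i j, Measurable fun s => (At s * Φ s) i j := by
    intro i j
    show Measurable fun s => ∑ l, At s i l * Φ s l j
    exact Finset.measurable_sum _ fun l _ => (hAm i l).mul (hΦc l j).measurable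
  have hNb : ∀ T : ℝ, ∃ C, 0 ≤ C ∧ ∀ s ∈ Icc (0:ℝ) T, ∀ i j, |(At s * Φ s) i j| ≤ C := by
    intro T
    obtain ⟨CA, hCA0, hCA⟩ := hAb T
    obtain ⟨CΦ, hCΦ0, hCΦ⟩ := aux_entbound Φ hΦc T
    refine ⟨n * CA * CΦ, by positivity, fun s hs i j => ?_⟩
    calc |(At s * Φ s) i j| = |∑ l, At s i l * Φ s l j| := by rw [Matrix.mul_apply]
      _ ≤ ∑ l, |At s i l * Φ s l j| := Finset.abs_sum_le_sum_abs _ _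
      _ ≤ ∑ _l : Fin n, CA * CΦ := by
          refine Finset.sum_le_sum fun l _ => ?_
          rw [abs_mul]
          exact mul_le_mul (hCA s hs i l) (hCΦ s hs l j) (abs_nonneg _) hCA0
      _ = n * CA * CΦ := by simp [mul_assoc]
  have hNent : ∀ i j, IntervalIntegrable (fun s => (At s * Φ s) i j) volume 0 t := by
    intro i j
    obtain ⟨C, h0, hC⟩ := hNb t
    exact aux_intInt (hNm i j).aestronglyMeasurable.restrict ht
      (C := C) (fun s hs => hC s hs i j)
  have hNvc : IntervalIntegrable (fun s => (At s * Φ s) *ᵥ c) volume 0 t := by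
    obtain ⟨C, h0, hC⟩ := hNb t
    refine aux_intInt (aux_measurable_mulVec hNm measurable_const).aestronglyMeasurable.restrict
      ht (C := n * C * ‖c‖) (fun s hs => ?_)
    exact aux_norm_mulVec_le _ _ h0 (hC s hs)
  funext i
  show ∑ j, Φ t i j * c j = (c + ∫ s in (0:ℝ)..t, (At s * Φ s) *ᵥ c) i
  have hrhs : (c + ∫ s in (0:ℝ)..t, (At s * Φ s) *ᵥ c) i
      = c i + (∫ s in (0:ℝ)..t, (At s * Φ s) *ᵥ c) i := rfl
  rw [hrhs, aux_pi_apply hNvc i]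
  have hent : ∀ s : ℝ, ((At s * Φ s) *ᵥ c) i = ∑ j, (At s * Φ s) i j * c j := fun s => rfl
  simp_rw [hent]
  rw [intervalIntegral.integral_finset_sum (fun j _ => ((hNent i j).mul_const (c j)))]
  simp_rw [intervalIntegral.integral_mul_const]
  have hL : ∑ j, Φ t i j * c j =
      ∑ j, ((1 : Matrix (Fin n) (Fin n) ℝ) i j + ∫ s in (0:ℝ)..t, (At s * Φ s) i j) * c j := by
    refine Finset.sum_congr rfl fun j _ => ?_
    rw [← hΦeq t ht i j]
  rw [hL]
  have h1 : ∑ j, (1 : Matrix (Fin n) (Fin n) ℝ) i j * c j = c i := by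
    simp [Matrix.one_apply]
  simp only [add_mul, Finset.sum_add_distrib, h1]

theorem aux_sys_integrands {n k m : ℕ} {Om : Set (Fin k → ℝ)} {U : Set (Fin m → ℝ)}
    (hUcl : IsClosed U)
    {A : (Fin k → ℝ) → (Fin m → ℝ) → Matrix (Fin n) (Fin n) ℝ}
    {b : (Fin k → ℝ) → (Fin m → ℝ) → (Fin n → ℝ)}
    {Cm : (Fin k → ℝ) → Matrix (Fin k) (Fin n) ℝ}
    {f : (Fin k → ℝ) → (Fin m → ℝ) → (Fin k → ℝ)}
    (hAc : ∀ i j, ContinuousOn (fun p : (Fin k → ℝ) × (Fin m → ℝ) => A p.1 p.2 i j) (Om ×ˢ U))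
    (hbc : ContinuousOn (fun p : (Fin k → ℝ) × (Fin m → ℝ) => b p.1 p.2) (Om ×ˢ U))
    (hCc : ∀ i j, ContinuousOn (fun z => Cm z i j) Om)
    (hfc : ContinuousOn (fun p : (Fin k → ℝ) × (Fin m → ℝ) => f p.1 p.2) (Om ×ˢ U))
    {x : ℝ → Fin n → ℝ} {y : ℝ → Fin k → ℝ} {u : ℝ → Fin m → ℝ}
    (hxc : ContinuousOn x (Ici 0)) (hyc : ContinuousOn y (Ici 0))
    (hyO : ∀ t, 0 ≤ t → y t ∈ Om)
    (hum : Measurable u) (huU : ∀ t, 0 ≤ t → u t ∈ U)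
    (hub : ∀ T : ℝ, ∃ M : ℝ, ∀ t ∈ Icc (0:ℝ) T, ‖u t‖ ≤ M)
    {a c : ℝ} (ha : 0 ≤ a) (hac : a ≤ c) :
    IntervalIntegrable (fun s => A (y s) (u s) *ᵥ x s) volume a c ∧
    IntervalIntegrable (fun s => b (y s) (u s)) volume a c ∧
    IntervalIntegrable (fun s => f (y s) (u s)) volume a c ∧
    IntervalIntegrable (fun s => Cm (y s) *ᵥ x s) volume a c := by
  have hclampc : Continuous fun s : ℝ => max s 0 := continuous_id.max continuous_const
  have hclmem : ∀ s : ℝ, max s 0 ∈ Ici (0:ℝ) := fun s => mem_Ici.mpr (le_max_right _ _)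
  set xc : ℝ → Fin n → ℝ := fun s => x (max s 0) with hxcdef
  have hxcc : Continuous xc := hxc.comp_continuous hclampc hclmem
  have hxceq : ∀ s : ℝ, 0 ≤ s → xc s = x s := fun s hs => by simp [hxcdef, max_eq_left hs]
  set yc : ℝ → Fin k → ℝ := fun s => y (max s 0) with hycdef
  have hycc : Continuous yc := hyc.comp_continuous hclampc hclmem
  have hyceq : ∀ s : ℝ, 0 ≤ s → yc s = y s := fun s hs => by simp [hycdef, max_eq_left hs]
  have hgA : ContinuousOn (fun p : (Fin k → ℝ) × (Fin m → ℝ) => (fun i j => A p.1 p.2 i j :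
      Fin n → Fin n → ℝ)) (Om ×ˢ U) :=
    continuousOn_pi.mpr fun i => continuousOn_pi.mpr fun j => hAc i j
  obtain ⟨GA, hGAm, hGAeq, hGAb⟩ := aux_coeff hUcl hgA hyc hyO hum huU hub
  obtain ⟨Gb, hGbm, hGbeq, hGbb⟩ := aux_coeff hUcl hbc hyc hyO hum huU hub
  obtain ⟨Gf, hGfm, hGfeq, hGfb⟩ := aux_coeff hUcl hfc hyc hyO hum huU hub
  have hGAent : ∀ T : ℝ, ∃ C, 0 ≤ C ∧ ∀ s ∈ Icc (0:ℝ) T, ∀ i j, |GA s i j| ≤ C := by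
    intro T
    obtain ⟨C, hC⟩ := hGAb T
    refine ⟨max C 0, le_max_right _ _, fun s hs i j => ?_⟩
    calc |GA s i j| ≤ ‖GA s i‖ := norm_le_pi_norm (GA s i) j
      _ ≤ ‖GA s‖ := norm_le_pi_norm (GA s) i
      _ ≤ max C 0 := (hC s hs).trans (le_max_left _ _)
  have hofGA : ∀ s : ℝ, 0 ≤ s → Matrix.of (GA s) = A (y s) (u s) := by
    intro s hs
    refine Matrix.ext fun i j => ?_
    rw [Matrix.of_apply, hGAeq s hs]
  refine ⟨?_, ?_, ?_, ?_⟩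
  · refine aux_trajint (F := fun s => A (y s) (u s) *ᵥ x s)
      (Fc := fun s => Matrix.of (GA s) *ᵥ xc s) ?_ ?_ ?_ ha hac
    · refine aux_measurable_mulVec (fun i j => ?_) hxcc.measurable
      show Measurable fun s => GA s i j
      exact (hGAm.eval (a := i)).eval (a := j)
    · intro T
      obtain ⟨C1, h10, h1⟩ := hGAent T
      obtain ⟨C2, h20, h2⟩ := aux_cbound xc hxcc T
      refine ⟨n * C1 * C2, fun s hs => ?_⟩
      refine (aux_norm_mulVec_le _ _ h10 (fun i j => h1 s hs i j)).trans ?_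
      nlinarith [norm_nonneg (xc s), h2 s hs, (by positivity : (0:ℝ) ≤ (n:ℝ) * C1)]
    · intro s hs
      show A (y s) (u s) *ᵥ x s = Matrix.of (GA s) *ᵥ xc s
      rw [hofGA s hs, hxceq s hs]
  · exact aux_trajint hGbm (fun T => by
      obtain ⟨C, hC⟩ := hGbb T
      exact ⟨C, hC⟩) (fun s hs => (hGbeq s hs).symm) ha hac
  · exact aux_trajint hGfm (fun T => by
      obtain ⟨C, hC⟩ := hGfb T
      exact ⟨C, hC⟩) (fun s hs => (hGfeq s hs).symm) ha hac
  · have hCtc : ∀ i j, Continuous fun s => Cm (yc s) i j := fun i j =>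
      (hCc i j).comp_continuous hycc (fun s => hyO _ (hclmem s))
    refine aux_trajint (F := fun s => Cm (y s) *ᵥ x s)
      (Fc := fun s => Cm (yc s) *ᵥ xc s)
      (aux_measurable_mulVec (fun i j => (hCtc i j).measurable) hxcc.measurable) ?_ ?_ ha hac
    · intro T
      obtain ⟨C1, h10, h1⟩ := aux_entbound (fun s => Cm (yc s)) hCtc T
      obtain ⟨C2, h20, h2⟩ := aux_cbound xc hxcc T
      refine ⟨n * C1 * C2, fun s hs => ?_⟩
      refine (aux_norm_mulVec_le _ _ h10 (h1 s hs)).trans ?_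
      nlinarith [norm_nonneg (xc s), h2 s hs, (by positivity : (0:ℝ) ≤ (n:ℝ) * C1)]
    · intro s hs
      show Cm (y s) *ᵥ x s = Cm (yc s) *ᵥ xc s
      rw [hyceq s hs, hxceq s hs]

theorem aux_varconst {n : ℕ} {At : ℝ → Matrix (Fin n) (Fin n) ℝ} {bt : ℝ → Fin n → ℝ}
    {x : ℝ → Fin n → ℝ} {Φ : ℝ → Matrix (Fin n) (Fin n) ℝ}
    (hAm : ∀ i j, Measurable fun s => At s i j)
    (hAb : ∀ T : ℝ, ∃ C, 0 ≤ C ∧ ∀ t ∈ Icc (0:ℝ) T, ∀ i j, |At t i j| ≤ C)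
    (hbm : Measurable bt) (hbb : ∀ T : ℝ, ∃ C, 0 ≤ C ∧ ∀ t ∈ Icc (0:ℝ) T, ‖bt t‖ ≤ C)
    (hxc : Continuous x)
    (hxeq : ∀ t, 0 ≤ t → x t = x 0 + ∫ s in (0:ℝ)..t, (At s *ᵥ x s + bt s))
    (hΦc : ∀ i j, Continuous fun t => Φ t i j)
    (hΦu : ∀ t : ℝ, IsUnit (Φ t).det)
    (hΦeq : ∀ (t : ℝ), 0 ≤ t → ∀ (i j : Fin n), Φ t i j =
      (1 : Matrix (Fin n) (Fin n) ℝ) i j + ∫ s in (0:ℝ)..t, (At s * Φ s) i j) :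
    ∀ t, 0 ≤ t → x t = Φ t *ᵥ x 0 + Φ t *ᵥ (∫ τ in (0:ℝ)..t, (Φ τ)⁻¹ *ᵥ bt τ) := by
  classical
  -- continuity facts for Φ and its inverse
  have hΦcont : Continuous Φ := continuous_matrix hΦc
  have hdet : Continuous fun t => (Φ t).det := hΦcont.matrix_det
  have hdetinv : Continuous fun t => ((Φ t).det)⁻¹ :=
    hdet.inv₀ fun t => (hΦu t).ne_zero
  have hadj : Continuous fun t => (Φ t).adjugate := hΦcont.matrix_adjugate
  have hinvc : ∀ i j, Continuous fun t => (Φ t)⁻¹ i j := by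
    intro i j
    have : ∀ t, (Φ t)⁻¹ i j = ((Φ t).det)⁻¹ * (Φ t).adjugate i j := by
      intro t
      rw [Matrix.inv_def]
      simp [Matrix.smul_apply, Ring.inverse_eq_inv']
    simp only [this]
    exact hdetinv.mul (hadj.matrix_elem i j)
  -- entry bounds on compacts for continuous matrix families
  have entbound : ∀ (M : ℝ → Matrix (Fin n) (Fin n) ℝ), (∀ i j, Continuous fun t => M t i j) →
      ∀ T : ℝ, ∃ C, 0 ≤ C ∧ ∀ t ∈ Icc (0:ℝ) T, ∀ i j, |M t i j| ≤ C := by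
    intro M hM T
    set P : ℝ → (Fin n → Fin n → ℝ) := fun t i j => M t i j with hP
    have hPc : Continuous P := continuous_pi fun i => continuous_pi fun j => hM i j
    obtain ⟨C, hC⟩ := isCompact_Icc.exists_bound_of_continuousOn
      (s := Icc (0:ℝ) T) hPc.continuousOn
    rcases le_or_gt 0 T with hT | hT
    · refine ⟨C, le_trans (norm_nonneg (P 0)) (hC 0 ⟨le_rfl, hT⟩), fun t ht i j => ?_⟩
      calc |M t i j| = ‖P t i j‖ := rfl
        _ ≤ ‖P t i‖ := norm_le_pi_norm (P t i) j
        _ ≤ ‖P t‖ := norm_le_pi_norm (P t) i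
        _ ≤ C := hC t ht
    · exact ⟨0, le_rfl, fun t ht => absurd (ht.1.trans ht.2) (not_le.mpr hT)⟩
  obtain ⟨CΦf⟩ : Nonempty True := ⟨trivial⟩
  -- the function ψ
  set ψ : ℝ → Fin n → ℝ := fun τ => (Φ τ)⁻¹ *ᵥ bt τ with hψ
  have hψm : Measurable ψ :=
    aux_measurable_mulVec (fun i j => (hinvc i j).measurable) hbm
  have hψb : ∀ T : ℝ, ∃ C, 0 ≤ C ∧ ∀ τ ∈ Icc (0:ℝ) T, ‖ψ τ‖ ≤ C := by
    intro T
    obtain ⟨Ci, hCi0, hCi⟩ := entbound (fun t => (Φ t)⁻¹) hinvc T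
    obtain ⟨Cb, hCb0, hCb⟩ := hbb T
    refine ⟨n * Ci * Cb, by positivity, fun τ hτ => ?_⟩
    calc ‖ψ τ‖ ≤ n * Ci * ‖bt τ‖ := aux_norm_mulVec_le _ _ hCi0 (hCi τ hτ)
      _ ≤ n * Ci * Cb := by
          have := hCb τ hτ
          have h0 : (0:ℝ) ≤ (n:ℝ) * Ci := by positivity
          nlinarith [norm_nonneg (bt τ)]
  -- N = At * Φ
  set N : ℝ → Matrix (Fin n) (Fin n) ℝ := fun s => At s * Φ s with hN
  have hNm : ∀ i j, Measurable fun s => N s i j := by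
    intro i j
    show Measurable fun s => ∑ l, At s i l * Φ s l j
    exact Finset.measurable_sum _ fun l _ => (hAm i l).mul (hΦc l j).measurable
  have hNb : ∀ T : ℝ, ∃ C, 0 ≤ C ∧ ∀ t ∈ Icc (0:ℝ) T, ∀ i j, |N t i j| ≤ C := by
    intro T
    obtain ⟨CA, hCA0, hCA⟩ := hAb T
    obtain ⟨CΦ, hCΦ0, hCΦ⟩ := entbound Φ hΦc T
    refine ⟨n * CA * CΦ, by positivity, fun t ht i j => ?_⟩
    calc |N t i j| = |∑ l, At t i l * Φ t l j| := by simp [hN, Matrix.mul_apply]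
      _ ≤ ∑ l, |At t i l * Φ t l j| := Finset.abs_sum_le_sum_abs _ _
      _ ≤ ∑ _l : Fin n, CA * CΦ := by
          refine Finset.sum_le_sum fun l _ => ?_
          rw [abs_mul]
          exact mul_le_mul (hCA t ht i l) (hCΦ t ht l j) (abs_nonneg _) hCA0
      _ = n * CA * CΦ := by simp [mul_assoc]
  -- normalized boundedness and integrability helpers
  have cbound : ∀ (F : ℝ → Fin n → ℝ), Continuous F →
      ∀ T : ℝ, ∃ C, 0 ≤ C ∧ ∀ s ∈ Icc (0:ℝ) T, ‖F s‖ ≤ C := by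
    intro F hF T
    obtain ⟨C, hC⟩ := isCompact_Icc.exists_bound_of_continuousOn
      (s := Icc (0:ℝ) T) hF.continuousOn
    exact ⟨max C 0, le_max_right _ _, fun s hs => (hC s hs).trans (le_max_left _ _)⟩
  have vint : ∀ (F : ℝ → Fin n → ℝ), Measurable F →
      (∀ T : ℝ, ∃ C, 0 ≤ C ∧ ∀ s ∈ Icc (0:ℝ) T, ‖F s‖ ≤ C) →
      ∀ a b : ℝ, 0 ≤ a → a ≤ b → IntervalIntegrable F volume a b := by
    intro F hFm hFb a b ha hab
    obtain ⟨C, hC0, hC⟩ := hFb b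
    exact aux_intInt hFm.aestronglyMeasurable.restrict hab
      (C := C) (fun s hs => hC s ⟨ha.trans hs.1, hs.2⟩)
  have rint : ∀ (F : ℝ → ℝ), Measurable F →
      (∀ T : ℝ, ∃ C, 0 ≤ C ∧ ∀ s ∈ Icc (0:ℝ) T, |F s| ≤ C) →
      ∀ a b : ℝ, 0 ≤ a → a ≤ b → IntervalIntegrable F volume a b := by
    intro F hFm hFb a b ha hab
    obtain ⟨C, hC0, hC⟩ := hFb b
    exact aux_intInt hFm.aestronglyMeasurable.restrict hab
      (C := C) (fun s hs => hC s ⟨ha.trans hs.1, hs.2⟩)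
  have mvb : ∀ (M : ℝ → Matrix (Fin n) (Fin n) ℝ) (w : ℝ → Fin n → ℝ),
      (∀ T : ℝ, ∃ C, 0 ≤ C ∧ ∀ s ∈ Icc (0:ℝ) T, ∀ i j, |M s i j| ≤ C) →
      (∀ T : ℝ, ∃ C, 0 ≤ C ∧ ∀ s ∈ Icc (0:ℝ) T, ‖w s‖ ≤ C) →
      ∀ T : ℝ, ∃ C, 0 ≤ C ∧ ∀ s ∈ Icc (0:ℝ) T, ‖M s *ᵥ w s‖ ≤ C := by
    intro M w hM hw T
    obtain ⟨C1, h10, h1⟩ := hM T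
    obtain ⟨C2, h20, h2⟩ := hw T
    refine ⟨n * C1 * C2, by positivity, fun s hs => ?_⟩
    calc ‖M s *ᵥ w s‖ ≤ n * C1 * ‖w s‖ := aux_norm_mulVec_le _ _ h10 (h1 s hs)
      _ ≤ n * C1 * C2 := by
          nlinarith [norm_nonneg (w s), h2 s hs, (by positivity : (0:ℝ) ≤ (n:ℝ) * C1)]
  have hNbent : ∀ i j, ∀ T : ℝ, ∃ C, 0 ≤ C ∧ ∀ s ∈ Icc (0:ℝ) T, |N s i j| ≤ C := by
    intro i j T
    obtain ⟨C, h0, hC⟩ := hNb T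
    exact ⟨C, h0, fun s hs => hC s hs i j⟩
  have hNvint : ∀ (c : Fin n → ℝ) (a b : ℝ), 0 ≤ a → a ≤ b →
      IntervalIntegrable (fun s => N s *ᵥ c) volume a b := by
    intro c a b ha hab
    refine vint _ (aux_measurable_mulVec hNm measurable_const) ?_ a b ha hab
    exact mvb N (fun _ => c) hNb (fun T => ⟨‖c‖, norm_nonneg c, fun s _ => le_rfl⟩)
  -- Φ in vector integral form
  have hΦv : ∀ (c : Fin n → ℝ) (t : ℝ), 0 ≤ t →
      Φ t *ᵥ c = c + ∫ s in (0:ℝ)..t, N s *ᵥ c := by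
    intro c t ht
    have hNvc := hNvint c 0 t le_rfl ht
    funext i
    show ∑ j, Φ t i j * c j = (c + ∫ s in (0:ℝ)..t, N s *ᵥ c) i
    have hrhs : (c + ∫ s in (0:ℝ)..t, N s *ᵥ c) i = c i + (∫ s in (0:ℝ)..t, N s *ᵥ c) i := rfl
    rw [hrhs, aux_pi_apply hNvc i]
    have hent : ∀ s : ℝ, (N s *ᵥ c) i = ∑ j, N s i j * c j := fun s => rfl
    simp_rw [hent]
    rw [intervalIntegral.integral_finset_sum
      (fun j _ => ((rint _ (hNm i j) (hNbent i j) 0 t le_rfl ht).mul_const (c j)))]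
    simp_rw [intervalIntegral.integral_mul_const]
    have hL : ∑ j, Φ t i j * c j =
        ∑ j, ((1 : Matrix (Fin n) (Fin n) ℝ) i j + ∫ s in (0:ℝ)..t, N s i j) * c j := by
      refine Finset.sum_congr rfl fun j _ => ?_
      rw [← hΦeq t ht i j]
    rw [hL]
    have h1 : ∑ j, (1 : Matrix (Fin n) (Fin n) ℝ) i j * c j = c i := by
      simp [Matrix.one_apply]
    simp only [add_mul, Finset.sum_add_distrib, h1]
  have hΦτt : ∀ (c : Fin n → ℝ) (τ t : ℝ), 0 ≤ τ → τ ≤ t →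
      (∫ s in τ..t, N s *ᵥ c) = Φ t *ᵥ c - Φ τ *ᵥ c := by
    intro c τ t hτ hτt
    have h1 := hNvint c 0 τ le_rfl hτ
    have h2 := hNvint c τ t hτ hτt
    have hadd := intervalIntegral.integral_add_adjacent_intervals h1 h2
    have hsub : (∫ s in τ..t, N s *ᵥ c) =
        (∫ s in (0:ℝ)..t, N s *ᵥ c) - ∫ s in (0:ℝ)..τ, N s *ᵥ c := by
      rw [← hadd]; abel
    rw [hsub, hΦv c τ hτ, hΦv c t (hτ.trans hτt)]
    abel
  -- primitive of ψ
  have hψint : ∀ a b : ℝ, 0 ≤ a → a ≤ b → IntervalIntegrable ψ volume a b :=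
    vint ψ hψm hψb
  have hGcont0 : ContinuousOn (fun t => ∫ s in (0:ℝ)..t, ψ s) (Ici 0) := by
    refine aux_primitive_contOn fun T hT => ?_
    obtain ⟨C, h0, hC⟩ := hψb T
    refine ⟨hψm.aestronglyMeasurable.restrict, HasFiniteIntegral.of_bounded (C := C) ?_⟩
    filter_upwards [ae_restrict_mem measurableSet_Icc] with s hs
    exact hC s hs
  set G : ℝ → Fin n → ℝ := fun s => ∫ τ in (0:ℝ)..(max s 0), ψ τ with hG
  have hGc : Continuous G :=
    hGcont0.comp_continuous (continuous_id.max continuous_const) (fun s => mem_Ici.mpr (le_max_right _ _))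
  have hGeq : ∀ s, 0 ≤ s → G s = ∫ τ in (0:ℝ)..s, ψ τ := by
    intro s hs
    simp [hG, max_eq_left hs]
  set θ : ℝ → Fin n → ℝ := fun s => Φ s *ᵥ G s with hθ
  have hθc : Continuous θ := hΦcont.matrix_mulVec hGc
  have hθm : Measurable θ := hθc.measurable
  have hθb := mvb Φ G (entbound Φ hΦc) (cbound G hGc)
  have hAθbint : ∀ a b : ℝ, 0 ≤ a → a ≤ b →
      IntervalIntegrable (fun s => At s *ᵥ θ s + bt s) volume a b := by
    intro a b ha hab
    refine vint _ ((aux_measurable_mulVec hAm hθm).add hbm) ?_ a b ha hab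
    intro T
    obtain ⟨C1, h10, h1⟩ := mvb At θ hAb hθb T
    obtain ⟨C2, h20, h2⟩ := hbb T
    refine ⟨C1 + (max C2 0), by positivity, fun s hs => ?_⟩
    refine (norm_add_le _ _).trans ?_
    have := h2 s hs
    have := h1 s hs
    have : ‖bt s‖ ≤ max C2 0 := (h2 s hs).trans (le_max_left _ _)
    linarith [h1 s hs]
  have hbtint : ∀ a b : ℝ, 0 ≤ a → a ≤ b → IntervalIntegrable bt volume a b := by
    intro a b ha hab
    refine vint _ hbm ?_ a b ha hab
    intro T
    obtain ⟨C, hC⟩ := hbb T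
    exact ⟨max C 0, le_max_right _ _, fun s hs => (hC.2 s hs).trans (le_max_left _ _)⟩
  -- the integral equation for θ
  have hθeq : ∀ t, 0 ≤ t → θ t = ∫ s in (0:ℝ)..t, (At s *ᵥ θ s + bt s) := by
    intro t ht
    obtain ⟨CN, hCN0, hCN⟩ := hNb t
    obtain ⟨Cψ, hCψ0, hCψ⟩ := hψb t
    have hNGint : IntervalIntegrable (fun s => N s *ᵥ G s) volume 0 t :=
      vint _ (aux_measurable_mulVec hNm hGc.measurable) (mvb N G hNb (cbound G hGc)) 0 t le_rfl ht
    have e1 : (∫ s in (0:ℝ)..t, (At s *ᵥ θ s + bt s)) =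
        (∫ s in (0:ℝ)..t, N s *ᵥ G s) + ∫ s in (0:ℝ)..t, bt s := by
      rw [← intervalIntegral.integral_add hNGint (hbtint 0 t le_rfl ht)]
      refine intervalIntegral.integral_congr fun s hs => ?_
      show At s *ᵥ θ s + bt s = N s *ᵥ G s + bt s
      have : N s *ᵥ G s = At s *ᵥ (Φ s *ᵥ G s) := by
        rw [hN, ← Matrix.mulVec_mulVec]
      rw [this]
    have e2 : (∫ s in (0:ℝ)..t, N s *ᵥ G s) =
        ∫ s in (0:ℝ)..t, N s *ᵥ (∫ τ in (0:ℝ)..s, ψ τ) := by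
      refine intervalIntegral.integral_congr fun s hs => ?_
      rw [uIcc_of_le ht] at hs
      rw [hGeq s hs.1]
    have hfub := aux_fubini (t := t) ht hNm hψm hCN0 hCψ0 hCN hCψ
    have e3 : (∫ τ in (0:ℝ)..t, (∫ s in τ..t, N s *ᵥ ψ τ)) =
        ∫ τ in (0:ℝ)..t, (Φ t *ᵥ ψ τ - bt τ) := by
      refine intervalIntegral.integral_congr fun τ hτ => ?_
      rw [uIcc_of_le ht] at hτ
      rw [hΦτt (ψ τ) τ t hτ.1 hτ.2]
      congr 1
      show Φ τ *ᵥ ((Φ τ)⁻¹ *ᵥ bt τ) = bt τ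
      rw [Matrix.mulVec_mulVec, Matrix.mul_nonsing_inv _ (hΦu τ), Matrix.one_mulVec]
    have hΦψint : IntervalIntegrable (fun τ => Φ t *ᵥ ψ τ) volume 0 t := by
      refine vint (fun τ => Φ t *ᵥ ψ τ)
        (aux_measurable_mulVec (M := fun _ => Φ t) (w := ψ) (fun i j => measurable_const) hψm)
        ?_ 0 t le_rfl ht
      exact mvb (fun _ => Φ t) ψ (entbound (fun _ => Φ t) (fun i j => continuous_const)) hψb
    have e4 : (∫ τ in (0:ℝ)..t, (Φ t *ᵥ ψ τ - bt τ)) =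
        Φ t *ᵥ (∫ τ in (0:ℝ)..t, ψ τ) - ∫ τ in (0:ℝ)..t, bt τ := by
      rw [intervalIntegral.integral_sub hΦψint (hbtint 0 t le_rfl ht),
        aux_mulVec_integral _ (hψint 0 t le_rfl ht)]
    rw [e1, e2, hfub, e3, e4]
    have : θ t = Φ t *ᵥ (∫ τ in (0:ℝ)..t, ψ τ) := by
      rw [hθ]
      show Φ t *ᵥ G t = _
      rw [hGeq t ht]
    rw [this]
    abel
  -- w satisfies the same integral equation as x
  set w : ℝ → Fin n → ℝ := fun s => Φ s *ᵥ x 0 + θ s with hw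
  have hwc : Continuous w := (hΦcont.matrix_mulVec continuous_const).add hθc
  have hweq : ∀ t, 0 ≤ t → w t = x 0 + ∫ s in (0:ℝ)..t, (At s *ᵥ w s + bt s) := by
    intro t ht
    have i1 := hNvint (x 0) 0 t le_rfl ht
    have i2 := hAθbint 0 t le_rfl ht
    have e5 : (∫ s in (0:ℝ)..t, (At s *ᵥ w s + bt s)) =
        (∫ s in (0:ℝ)..t, N s *ᵥ x 0) + ∫ s in (0:ℝ)..t, (At s *ᵥ θ s + bt s) := by
      rw [← intervalIntegral.integral_add i1 i2]
      refine intervalIntegral.integral_congr fun s hs => ?_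
      show At s *ᵥ w s + bt s = N s *ᵥ x 0 + (At s *ᵥ θ s + bt s)
      have h6 : At s *ᵥ w s = At s *ᵥ (Φ s *ᵥ x 0) + At s *ᵥ θ s := by
        show At s *ᵥ (Φ s *ᵥ x 0 + θ s) = _
        rw [Matrix.mulVec_add]
      rw [h6, Matrix.mulVec_mulVec]
      abel
    rw [e5, ← hθeq t ht]
    have h7 := hΦv (x 0) t ht
    show Φ t *ᵥ x 0 + θ t = _
    rw [h7]
    abel
  -- Gronwall
  intro t0 ht0
  obtain ⟨CA, hCA0, hCA⟩ := hAb t0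
  set d : ℝ → Fin n → ℝ := fun s => x s - w s with hd
  have hdc : Continuous d := hxc.sub hwc
  have hdeq : ∀ t, 0 ≤ t → d t = ∫ s in (0:ℝ)..t, At s *ᵥ d s := by
    intro t ht
    have ix : IntervalIntegrable (fun s => At s *ᵥ x s + bt s) volume 0 t := by
      refine vint _ ((aux_measurable_mulVec hAm hxc.measurable).add hbm) ?_ 0 t le_rfl ht
      intro T
      obtain ⟨C1, h10, h1⟩ := mvb At x hAb (cbound x hxc) T
      obtain ⟨C2, h20, h2⟩ := hbb T
      refine ⟨C1 + max C2 0, by positivity, fun s hs => ?_⟩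
      refine (norm_add_le _ _).trans ?_
      have h3 : ‖bt s‖ ≤ max C2 0 := (h2 s hs).trans (le_max_left _ _)
      linarith [h1 s hs]
    have iw : IntervalIntegrable (fun s => At s *ᵥ w s + bt s) volume 0 t := by
      refine vint _ ((aux_measurable_mulVec hAm hwc.measurable).add hbm) ?_ 0 t le_rfl ht
      intro T
      obtain ⟨C1, h10, h1⟩ := mvb At w hAb (cbound w hwc) T
      obtain ⟨C2, h20, h2⟩ := hbb T
      refine ⟨C1 + max C2 0, by positivity, fun s hs => ?_⟩
      refine (norm_add_le _ _).trans ?_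
      have h3 : ‖bt s‖ ≤ max C2 0 := (h2 s hs).trans (le_max_left _ _)
      linarith [h1 s hs]
    have e6 : d t = (∫ s in (0:ℝ)..t, (At s *ᵥ x s + bt s))
        - ∫ s in (0:ℝ)..t, (At s *ᵥ w s + bt s) := by
      show x t - w t = _
      rw [hxeq t ht, hweq t ht]
      abel
    rw [e6, ← intervalIntegral.integral_sub ix iw]
    refine intervalIntegral.integral_congr fun s hs => ?_
    show At s *ᵥ x s + bt s - (At s *ᵥ w s + bt s) = At s *ᵥ (x s - w s)
    rw [Matrix.mulVec_sub]
    abel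
  have hle : ∀ t ∈ Icc (0:ℝ) t0, ‖d t‖ ≤ ((n:ℝ) * CA) * ∫ s in (0:ℝ)..t, ‖d s‖ := by
    intro t htt
    have h8 : d t = ∫ s in (0:ℝ)..t, At s *ᵥ d s := hdeq t htt.1
    have i3 : IntervalIntegrable (fun s => ‖At s *ᵥ d s‖) volume 0 t := by
      refine rint _ ((aux_measurable_mulVec hAm hdc.measurable).norm) ?_ 0 t le_rfl htt.1
      intro T
      obtain ⟨C1, h10, h1⟩ := mvb At d hAb (cbound d hdc) T
      exact ⟨C1, h10, fun s hs => by simpa using h1 s hs⟩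
    have i4 : IntervalIntegrable (fun s => (n:ℝ) * CA * ‖d s‖) volume 0 t :=
      (Continuous.intervalIntegrable (by fun_prop) _ _)
    calc ‖d t‖ = ‖∫ s in (0:ℝ)..t, At s *ᵥ d s‖ := by rw [← h8]
      _ ≤ ∫ s in (0:ℝ)..t, ‖At s *ᵥ d s‖ :=
          intervalIntegral.norm_integral_le_integral_norm htt.1
      _ ≤ ∫ s in (0:ℝ)..t, (n:ℝ) * CA * ‖d s‖ := by
          refine intervalIntegral.integral_mono_on htt.1 i3 i4 fun s hs => ?_
          exact aux_norm_mulVec_le _ _ hCA0 (hCA s ⟨hs.1, hs.2.trans htt.2⟩)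
      _ = ((n:ℝ) * CA) * ∫ s in (0:ℝ)..t, ‖d s‖ := intervalIntegral.integral_const_mul _ _
  have hgron := aux_gronwall (g := fun s => ‖d s‖) (c := (n:ℝ) * CA) (T := t0)
    (by positivity) ht0 hdc.norm.continuousOn (fun t _ => norm_nonneg _) hle
  have hd0 : d t0 = 0 := norm_eq_zero.mp (hgron t0 ⟨ht0, le_rfl⟩)
  have hx0 : x t0 = w t0 := by
    have h9 : x t0 - w t0 = 0 := hd0
    exact sub_eq_zero.mp h9
  rw [hx0]
  show Φ t0 *ᵥ x 0 + Φ t0 *ᵥ G t0 = _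
  rw [hGeq t0 ht0]

/-- Proposition 2.3, formula (2.12): if `u` strongly distinguishes
`(x₀,y₀)` in time `r > 0`, then `Q` is positive definite and
`x₀ = Q⁻¹(r,x₀,y₀;u) ∫₀ʳ q(t) p(t) dt`. -/
theorem initial_state_reconstruction_formula
    (n k m : ℕ) (O : Set ((Fin n → ℝ) × (Fin k → ℝ))) (hO : IsOpen O)
    (U : Set (Fin m → ℝ)) (hUne : U.Nonempty) (hUcl : IsClosed U)
    (A : (Fin k → ℝ) → (Fin m → ℝ) → Matrix (Fin n) (Fin n) ℝ)
    (b : (Fin k → ℝ) → (Fin m → ℝ) → (Fin n → ℝ))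
    (Cm : (Fin k → ℝ) → Matrix (Fin k) (Fin n) ℝ)
    (f : (Fin k → ℝ) → (Fin m → ℝ) → (Fin k → ℝ))
    (hA : ∀ i j, LocLipOn (({y : Fin k → ℝ | ∃ x : Fin n → ℝ, (x, y) ∈ O}) ×ˢ U)
      (fun p => A p.1 p.2 i j))
    (hb : LocLipOn (({y : Fin k → ℝ | ∃ x : Fin n → ℝ, (x, y) ∈ O}) ×ˢ U)
      (fun p => b p.1 p.2))
    (hCm : ∀ i j, LocLipOn {y : Fin k → ℝ | ∃ x : Fin n → ℝ, (x, y) ∈ O} (fun y => Cm y i j))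
    (hf : LocLipOn (({y : Fin k → ℝ | ∃ x : Fin n → ℝ, (x, y) ∈ O}) ×ˢ U)
      (fun p => f p.1 p.2))
    (X : (Fin n → ℝ) → (Fin k → ℝ) → (ℝ → (Fin m → ℝ)) → ℝ → (Fin n → ℝ))
    (Y : (Fin n → ℝ) → (Fin k → ℝ) → (ℝ → (Fin m → ℝ)) → ℝ → (Fin k → ℝ))
    (hXY : ∀ x₀ y₀, (x₀, y₀) ∈ O → ∀ u, AdmLoc m U u →
      IsSystemSol n k m O A b Cm f u (X x₀ y₀ u) (Y x₀ y₀ u) ∧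
        X x₀ y₀ u 0 = x₀ ∧ Y x₀ y₀ u 0 = y₀)
    (hUniq : ∀ x₀ y₀, (x₀, y₀) ∈ O → ∀ u, AdmLoc m U u → ∀ x y,
      IsSystemSol n k m O A b Cm f u x y → x 0 = x₀ → y 0 = y₀ →
        ∀ t, 0 ≤ t → x t = X x₀ y₀ u t ∧ y t = Y x₀ y₀ u t)
    (r : ℝ) (hr : 0 < r)
    (x₀ : Fin n → ℝ) (y₀ : Fin k → ℝ) (hxy₀ : (x₀, y₀) ∈ O)
    (u : ℝ → (Fin m → ℝ)) (hu : AdmLoc m U u) (huU : ∀ t ∈ Icc (0:ℝ) r, u t ∈ U)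
    (Φ : ℝ → Matrix (Fin n) (Fin n) ℝ)
    (hΦ : IsTransition n k m A (Y x₀ y₀ u) u Φ)
    (hdist : StronglyDist n k m O Y r u x₀ y₀) :
    (Qmat n k r Cm (Y x₀ y₀ u) Φ).PosDef ∧
      x₀ = (Qmat n k r Cm (Y x₀ y₀ u) Φ)⁻¹ *ᵥ
        ∫ t in (0:ℝ)..r,
          qmat n k Cm (Y x₀ y₀ u) Φ t *ᵥ pvec n k m b Cm f (Y x₀ y₀ u) u Φ t := by
  
  classical
  obtain ⟨humeas, huU0, hub⟩ := hu
  obtain ⟨hsol, hx0, hy0⟩ := hXY x₀ y₀ hxy₀ u ⟨humeas, huU0, hub⟩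
  obtain ⟨hxc, hyc, hmem, hxeq, hyeq⟩ := hsol
  obtain ⟨hΦ0, hΦc, hΦu, hΦeqent⟩ := hΦ
  set x : ℝ → Fin n → ℝ := X x₀ y₀ u with hxdef
  set y : ℝ → Fin k → ℝ := Y x₀ y₀ u with hydef
  set Om : Set (Fin k → ℝ) := {z : Fin k → ℝ | ∃ xx : Fin n → ℝ, (xx, z) ∈ O} with hOmdef
  have hAc : ∀ i j, ContinuousOn (fun p : (Fin k → ℝ) × (Fin m → ℝ) => A p.1 p.2 i j)
      (Om ×ˢ U) := fun i j => aux_locLip_contOn (hA i j)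
  have hbc : ContinuousOn (fun p : (Fin k → ℝ) × (Fin m → ℝ) => b p.1 p.2) (Om ×ˢ U) :=
    aux_locLip_contOn hb
  have hCc : ∀ i j, ContinuousOn (fun z => Cm z i j) Om := fun i j => aux_locLip_contOn (hCm i j)
  have hfc : ContinuousOn (fun p : (Fin k → ℝ) × (Fin m → ℝ) => f p.1 p.2) (Om ×ˢ U) :=
    aux_locLip_contOn hf
  have hyO : ∀ t, 0 ≤ t → y t ∈ Om := fun t ht => ⟨x t, hmem t ht⟩
  have hΦcont : Continuous Φ := continuous_matrix hΦc
  -- clamped trajectory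
  have hclampc : Continuous fun s : ℝ => max s 0 := continuous_id.max continuous_const
  have hclmem : ∀ s : ℝ, max s 0 ∈ Ici (0:ℝ) := fun s => mem_Ici.mpr (le_max_right _ _)
  set xcl : ℝ → Fin n → ℝ := fun s => x (max s 0) with hxcldef
  have hxclc : Continuous xcl := hxc.comp_continuous hclampc hclmem
  have hxcleq : ∀ s : ℝ, 0 ≤ s → xcl s = x s := fun s hs => by simp [hxcldef, max_eq_left hs]
  set ycl : ℝ → Fin k → ℝ := fun s => y (max s 0) with hycldef
  have hyclc : Continuous ycl := hyc.comp_continuous hclampc hclmem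
  have hycleq : ∀ s : ℝ, 0 ≤ s → ycl s = y s := fun s hs => by simp [hycldef, max_eq_left hs]
  -- clamped coefficients
  have hgA : ContinuousOn (fun p : (Fin k → ℝ) × (Fin m → ℝ) =>
      (fun i j => A p.1 p.2 i j : Fin n → Fin n → ℝ)) (Om ×ˢ U) :=
    continuousOn_pi.mpr fun i => continuousOn_pi.mpr fun j => hAc i j
  obtain ⟨GA, hGAm, hGAeq, hGAb⟩ := aux_coeff hUcl hgA hyc hyO humeas huU0 hub
  obtain ⟨Gb, hGbm, hGbeq, hGbb⟩ := aux_coeff hUcl hbc hyc hyO humeas huU0 hub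
  set At : ℝ → Matrix (Fin n) (Fin n) ℝ := fun s => Matrix.of (GA s) with hAtdef
  have hAtm : ∀ i j, Measurable fun s => At s i j := by
    intro i j
    show Measurable fun s => GA s i j
    exact (hGAm.eval (a := i)).eval (a := j)
  have hAteq : ∀ s, 0 ≤ s → At s = A (y s) (u s) := by
    intro s hs
    refine Matrix.ext fun i j => ?_
    show GA s i j = A (y s) (u s) i j
    rw [hGAeq s hs]
  have hAtb : ∀ T : ℝ, ∃ C, 0 ≤ C ∧ ∀ t ∈ Icc (0:ℝ) T, ∀ i j, |At t i j| ≤ C := by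
    intro T
    obtain ⟨C, hC⟩ := hGAb T
    refine ⟨max C 0, le_max_right _ _, fun t ht i j => ?_⟩
    calc |At t i j| = ‖GA t i j‖ := rfl
      _ ≤ ‖GA t i‖ := norm_le_pi_norm (GA t i) j
      _ ≤ ‖GA t‖ := norm_le_pi_norm (GA t) i
      _ ≤ max C 0 := (hC t ht).trans (le_max_left _ _)
  have hbtb : ∀ T : ℝ, ∃ C, 0 ≤ C ∧ ∀ t ∈ Icc (0:ℝ) T, ‖Gb t‖ ≤ C := by
    intro T
    obtain ⟨C, hC⟩ := hGbb T
    exact ⟨max C 0, le_max_right _ _, fun t ht => (hC t ht).trans (le_max_left _ _)⟩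
  -- clamped integral equation for x
  have hxceq2 : ∀ t, 0 ≤ t → xcl t = xcl 0 + ∫ s in (0:ℝ)..t, (At s *ᵥ xcl s + Gb s) := by
    intro t ht
    rw [hxcleq t ht, hxcleq 0 le_rfl, hxeq t ht]
    congr 1
    refine intervalIntegral.integral_congr fun s hs => ?_
    rw [uIcc_of_le ht] at hs
    show A (y s) (u s) *ᵥ x s + b (y s) (u s) = At s *ᵥ xcl s + Gb s
    rw [hAteq s hs.1, hGbeq s hs.1, hxcleq s hs.1]
  have hΦeqc : ∀ t, 0 ≤ t → ∀ i j, Φ t i j =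
      (1 : Matrix (Fin n) (Fin n) ℝ) i j + ∫ s in (0:ℝ)..t, (At s * Φ s) i j := by
    intro t ht i j
    rw [hΦeqent t i j]
    congr 1
    refine intervalIntegral.integral_congr fun s hs => ?_
    rw [uIcc_of_le ht] at hs
    show (A (y s) (u s) * Φ s) i j = (At s * Φ s) i j
    rw [hAteq s hs.1]
  -- variation of constants
  have hvar := aux_varconst hAtm hAtb hGbm hbtb hxclc hxceq2 hΦc hΦu hΦeqc
  have hθint : ∀ t, 0 ≤ t → thetaVec n k m b y u Φ t
      = Φ t *ᵥ (∫ τ in (0:ℝ)..t, (Φ τ)⁻¹ *ᵥ Gb τ) := by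
    intro t ht
    show Φ t *ᵥ (∫ τ in (0:ℝ)..t, (Φ τ)⁻¹ *ᵥ b (y τ) (u τ)) = _
    have hcg : (∫ τ in (0:ℝ)..t, (Φ τ)⁻¹ *ᵥ b (y τ) (u τ))
        = ∫ τ in (0:ℝ)..t, (Φ τ)⁻¹ *ᵥ Gb τ := by
      refine intervalIntegral.integral_congr fun τ hτ => ?_
      rw [uIcc_of_le ht] at hτ
      show (Φ τ)⁻¹ *ᵥ b (y τ) (u τ) = (Φ τ)⁻¹ *ᵥ Gb τ
      rw [hGbeq τ hτ.1]
    rw [hcg]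
  have hxθ : ∀ t, 0 ≤ t → x t = Φ t *ᵥ x₀ + thetaVec n k m b y u Φ t := by
    intro t ht
    rw [hθint t ht, ← hxcleq t ht, hvar t ht, hxcleq 0 le_rfl, hx0]
  -- R and the continuous version of q
  set Ct : ℝ → Matrix (Fin k) (Fin n) ℝ := fun s => Cm (ycl s) with hCtdef
  have hCtc : ∀ i j, Continuous fun s => Ct s i j := fun i j =>
    (hCc i j).comp_continuous hyclc (fun s => hyO _ (hclmem s))
  have hCteq : ∀ s, 0 ≤ s → Ct s = Cm (y s) := by
    intro s hs
    show Cm (ycl s) = Cm (y s)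
    rw [hycleq s hs]
  set R : ℝ → Matrix (Fin k) (Fin n) ℝ := fun s => Ct s * Φ s with hRdef
  have hRc : ∀ i j, Continuous fun s => R s i j := by
    intro i j
    show Continuous fun s => ∑ l, Ct s i l * Φ s l j
    exact continuous_finset_sum _ fun l _ => (hCtc i l).mul (hΦc l j)
  have hRcont : Continuous R := continuous_matrix hRc
  have hRvc : ∀ c : Fin n → ℝ, Continuous fun s => R s *ᵥ c :=
    fun c => hRcont.matrix_mulVec continuous_const
  set qc : ℝ → Matrix (Fin n) (Fin k) ℝ :=
    fun t => Matrix.of fun i j => ∫ s in (0:ℝ)..t, R s j i with hqcdef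
  have hqcc : ∀ i j, Continuous fun t => qc t i j := by
    intro i j
    show Continuous fun t => ∫ s in (0:ℝ)..t, R s j i
    exact intervalIntegral.continuous_primitive (fun a c => (hRc j i).intervalIntegrable a c) 0
  have hqeq : ∀ t, 0 ≤ t → qmat n k Cm y Φ t = qc t := by
    intro t ht
    refine Matrix.ext fun i j => ?_
    show (∫ s in (0:ℝ)..t, ((Φ s)ᵀ * (Cm (y s))ᵀ) i j) = ∫ s in (0:ℝ)..t, R s j i
    refine intervalIntegral.integral_congr fun s hs => ?_
    rw [uIcc_of_le ht] at hs
    show ((Φ s)ᵀ * (Cm (y s))ᵀ) i j = (Ct s * Φ s) j i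
    rw [hCteq s hs.1, Matrix.mul_apply, Matrix.mul_apply]
    refine Finset.sum_congr rfl fun l _ => ?_
    rw [Matrix.transpose_apply, Matrix.transpose_apply]
    ring
  have hqct : ∀ (c : Fin n → ℝ) (t : ℝ), (qc t)ᵀ *ᵥ c = ∫ s in (0:ℝ)..t, R s *ᵥ c := by
    intro c t
    funext a
    show ∑ i, (qc t)ᵀ a i * c i = (∫ s in (0:ℝ)..t, R s *ᵥ c) a
    rw [aux_pi_apply ((hRvc c).intervalIntegrable 0 t) a]
    have hent : ∀ s : ℝ, (R s *ᵥ c) a = ∑ i, R s a i * c i := fun s => rfl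
    simp_rw [hent]
    rw [intervalIntegral.integral_finset_sum (f := fun i s => R s a i * c i)
      (fun i _ => ((hRc a i).mul continuous_const).intervalIntegrable 0 t)]
    refine Finset.sum_congr rfl fun i _ => ?_
    show (∫ s in (0:ℝ)..t, R s a i) * c i = ∫ s in (0:ℝ)..t, R s a i * c i
    rw [intervalIntegral.integral_mul_const]
  -- the identity p(t) = q(t)ᵀ x₀
  have hp : ∀ t, 0 ≤ t → pvec n k m b Cm f y u Φ t = ∫ s in (0:ℝ)..t, R s *ᵥ x₀ := by
    intro t ht
    obtain ⟨hiA, hib, hif, hiC⟩ :=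
      aux_sys_integrands hUcl hAc hbc hCc hfc hxc hyc hyO humeas huU0 hub (le_refl (0:ℝ)) ht
    have hΦx0c : ContinuousOn (fun s => Φ s *ᵥ x₀) (Ici 0) :=
      (hΦcont.matrix_mulVec continuous_const).continuousOn
    obtain ⟨-, -, -, hiC2⟩ :=
      aux_sys_integrands hUcl hAc hbc hCc hfc hΦx0c hyc hyO humeas huU0 hub (le_refl (0:ℝ)) ht
    have h2 : y t - y 0 - (∫ s in (0:ℝ)..t, f (y s) (u s))
        = ∫ s in (0:ℝ)..t, Cm (y s) *ᵥ x s := by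
      rw [hyeq t ht, intervalIntegral.integral_add hif hiC]
      abel
    have h3 : (∫ s in (0:ℝ)..t, Cm (y s) *ᵥ thetaVec n k m b y u Φ s)
        = (∫ s in (0:ℝ)..t, Cm (y s) *ᵥ x s) - ∫ s in (0:ℝ)..t, Cm (y s) *ᵥ (Φ s *ᵥ x₀) := by
      rw [← intervalIntegral.integral_sub hiC hiC2]
      refine intervalIntegral.integral_congr fun s hs => ?_
      rw [uIcc_of_le ht] at hs
      have h4 : thetaVec n k m b y u Φ s = x s - Φ s *ᵥ x₀ := by
        rw [hxθ s hs.1]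
        abel
      show Cm (y s) *ᵥ thetaVec n k m b y u Φ s = Cm (y s) *ᵥ x s - Cm (y s) *ᵥ (Φ s *ᵥ x₀)
      rw [h4, Matrix.mulVec_sub]
    have h5 : (∫ s in (0:ℝ)..t, Cm (y s) *ᵥ (Φ s *ᵥ x₀)) = ∫ s in (0:ℝ)..t, R s *ᵥ x₀ := by
      refine intervalIntegral.integral_congr fun s hs => ?_
      rw [uIcc_of_le ht] at hs
      show Cm (y s) *ᵥ (Φ s *ᵥ x₀) = (Ct s * Φ s) *ᵥ x₀
      rw [hCteq s hs.1, Matrix.mulVec_mulVec]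
    have h6 : pvec n k m b Cm f y u Φ t
        = (∫ s in (0:ℝ)..t, Cm (y s) *ᵥ x s)
          - ((∫ s in (0:ℝ)..t, Cm (y s) *ᵥ x s) - ∫ s in (0:ℝ)..t, R s *ᵥ x₀) := by
      show y t - y 0 - (∫ s in (0:ℝ)..t, f (y s) (u s))
        - (∫ s in (0:ℝ)..t, Cm (y s) *ᵥ thetaVec n k m b y u Φ s) = _
      rw [h3, h5, h2]
    rw [h6]
    abel
  -- quadratic form of Q
  set S : ℝ → Matrix (Fin n) (Fin n) ℝ := fun t => qc t * (qc t)ᵀ with hSdef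
  have hScont : ∀ i j, Continuous fun t => S t i j := by
    intro i j
    show Continuous fun t => ∑ l, qc t i l * (qc t)ᵀ l j
    refine continuous_finset_sum _ fun l _ => (hqcc i l).mul ?_
    show Continuous fun t => qc t j l
    exact hqcc j l
  have hQentry : ∀ i j, Qmat n k r Cm y Φ i j = ∫ t in (0:ℝ)..r, S t i j := by
    intro i j
    show (∫ t in (0:ℝ)..r, (qmat n k Cm y Φ t * (qmat n k Cm y Φ t)ᵀ) i j) = _
    refine intervalIntegral.integral_congr fun t ht => ?_
    rw [uIcc_of_le hr.le] at ht
    show (qmat n k Cm y Φ t * (qmat n k Cm y Φ t)ᵀ) i j = (qc t * (qc t)ᵀ) i j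
    rw [hqeq t ht.1]
  have hquad : ∀ v : Fin n → ℝ, v ⬝ᵥ (Qmat n k r Cm y Φ *ᵥ v)
      = ∫ t in (0:ℝ)..r, ((qc t)ᵀ *ᵥ v) ⬝ᵥ ((qc t)ᵀ *ᵥ v) := by
    intro v
    have hint : ∀ i j, IntervalIntegrable (fun t => v i * (S t i j * v j)) volume 0 r :=
      fun i j => (continuous_const.mul ((hScont i j).mul continuous_const)).intervalIntegrable 0 r
    calc v ⬝ᵥ (Qmat n k r Cm y Φ *ᵥ v)
        = ∑ i, v i * ∑ j, Qmat n k r Cm y Φ i j * v j := rfl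
      _ = ∑ i, ∑ j, v i * ((∫ t in (0:ℝ)..r, S t i j) * v j) := by
          refine Finset.sum_congr rfl fun i _ => ?_
          rw [Finset.mul_sum]
          exact Finset.sum_congr rfl fun j _ => by rw [hQentry i j]
      _ = ∑ i, ∑ j, ∫ t in (0:ℝ)..r, v i * (S t i j * v j) := by
          refine Finset.sum_congr rfl fun i _ => Finset.sum_congr rfl fun j _ => ?_
          rw [← intervalIntegral.integral_mul_const, ← intervalIntegral.integral_const_mul]
      _ = ∑ i, ∫ t in (0:ℝ)..r, ∑ j, v i * (S t i j * v j) := by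
          refine Finset.sum_congr rfl fun i _ => ?_
          rw [intervalIntegral.integral_finset_sum (fun j _ => hint i j)]
      _ = ∫ t in (0:ℝ)..r, ∑ i, ∑ j, v i * (S t i j * v j) := by
          rw [intervalIntegral.integral_finset_sum (fun i _ => ?_)]
          exact (continuous_finset_sum _ fun j _ =>
            continuous_const.mul ((hScont i j).mul continuous_const)).intervalIntegrable 0 r
      _ = ∫ t in (0:ℝ)..r, ((qc t)ᵀ *ᵥ v) ⬝ᵥ ((qc t)ᵀ *ᵥ v) := by
          refine intervalIntegral.integral_congr fun t _ => ?_
          have h1 : ∑ i, ∑ j, v i * (S t i j * v j) = v ⬝ᵥ (S t *ᵥ v) := by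
            show _ = ∑ i, v i * ∑ j, S t i j * v j
            exact Finset.sum_congr rfl fun i _ => (Finset.mul_sum _ _ _).symm
          rw [h1]
          have h2 : S t *ᵥ v = qc t *ᵥ ((qc t)ᵀ *ᵥ v) := by
            rw [Matrix.mulVec_mulVec]
          rw [h2, Matrix.dotProduct_mulVec, ← Matrix.mulVec_transpose]
  have hherm : (Qmat n k r Cm y Φ).IsHermitian := by
    refine Matrix.ext fun i j => ?_
    rw [Matrix.conjTranspose_apply, star_trivial, hQentry j i, hQentry i j]
    refine intervalIntegral.integral_congr fun t _ => ?_
    show (qc t * (qc t)ᵀ) j i = (qc t * (qc t)ᵀ) i j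
    rw [Matrix.mul_apply, Matrix.mul_apply]
    refine Finset.sum_congr rfl fun l _ => ?_
    rw [Matrix.transpose_apply, Matrix.transpose_apply]
    ring
  -- kernel property from strong distinguishability
  have hker : ∀ v : Fin n → ℝ, v ≠ 0 →
      ¬ (∀ t ∈ Icc (0:ℝ) r, (∫ s in (0:ℝ)..t, R s *ᵥ v) = 0) := by
    intro v hv hz
    have hKc : IsCompact ((fun t => (x t, y t)) '' Icc 0 r) :=
      isCompact_Icc.image_of_continuousOn
        ((hxc.mono Icc_subset_Ici_self).prodMk (hyc.mono Icc_subset_Ici_self))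
    have hKO : ((fun t => (x t, y t)) '' Icc 0 r) ⊆ O := by
      rintro p ⟨t, ht, rfl⟩
      exact hmem t ht.1
    obtain ⟨δ, hδ0, hδ⟩ := hKc.exists_thickening_subset_open hO hKO
    obtain ⟨CΦ, hCΦ0, hCΦ⟩ := aux_entbound Φ hΦc r
    set ε : ℝ := δ / (n * CΦ * ‖v‖ + 1) with hεdef
    have hε0 : 0 < ε := div_pos hδ0 (by positivity)
    have hpb : ∀ t ∈ Icc (0:ℝ) r, ‖ε • (Φ t *ᵥ v)‖ < δ := by
      intro t ht
      rw [norm_smul, Real.norm_eq_abs, abs_of_pos hε0]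
      have h1 : ‖Φ t *ᵥ v‖ ≤ n * CΦ * ‖v‖ := aux_norm_mulVec_le _ _ hCΦ0 (hCΦ t ht)
      have h2 : ε * ‖Φ t *ᵥ v‖ ≤ ε * (n * CΦ * ‖v‖) := by nlinarith [hε0.le]
      refine h2.trans_lt ?_
      rw [hεdef, div_mul_eq_mul_div, div_lt_iff₀ (by positivity)]
      nlinarith [hδ0, (by positivity : (0:ℝ) ≤ (n:ℝ) * CΦ * ‖v‖)]
    have hmemO : ∀ t ∈ Icc (0:ℝ) r, (x t + ε • (Φ t *ᵥ v), y t) ∈ O := by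
      intro t ht
      refine hδ ?_
      rw [Metric.mem_thickening_iff]
      refine ⟨(x t, y t), ⟨t, ht, rfl⟩, ?_⟩
      rw [Prod.dist_eq]
      have hd1 : dist (x t + ε • (Φ t *ᵥ v)) (x t) = ‖ε • (Φ t *ᵥ v)‖ := by
        rw [dist_eq_norm]
        congr 1
        abel
      rw [hd1, dist_self]
      exact max_lt (hpb t ht) hδ0
    set ξ : Fin n → ℝ := x₀ + ε • v with hξdef
    have hξO : (ξ, y₀) ∈ O := by
      have h0 := hmemO 0 ⟨le_rfl, hr.le⟩
      rw [hx0, hy0, hΦ0, Matrix.one_mulVec] at h0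
      exact h0
    have hξne : ξ ≠ x₀ := by
      intro h
      apply hv
      have hev : ε • v = 0 := by
        have h1 : x₀ + ε • v - x₀ = x₀ - x₀ := by rw [hξdef] at h; rw [h]
        simpa using h1
      rcases smul_eq_zero.mp hev with h1 | h1
      · exact absurd h1 (ne_of_gt hε0)
      · exact h1
    set us : ℝ → Fin m → ℝ := fun s => u (r + s) with husdef
    have husA : AdmLoc m U us := by
      refine ⟨humeas.comp (measurable_const.add measurable_id), fun t ht => huU0 _ (by linarith), fun T => ?_⟩
      obtain ⟨M, hM⟩ := hub (r + T)
      exact ⟨M, fun t ht => hM (r + t) ⟨by linarith [ht.1], by linarith [ht.2]⟩⟩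
    have hmemr := hmemO r ⟨hr.le, le_rfl⟩
    obtain ⟨⟨hXsc, hYsc, hmem2, hxeq2, hyeq2⟩, hXs0, hYs0⟩ :=
      hXY (x r + ε • (Φ r *ᵥ v)) (y r) hmemr us husA
    set Xs : ℝ → Fin n → ℝ := X (x r + ε • (Φ r *ᵥ v)) (y r) us with hXsdef
    set Ys : ℝ → Fin k → ℝ := Y (x r + ε • (Φ r *ᵥ v)) (y r) us with hYsdef
    set xt : ℝ → Fin n → ℝ := fun t => if t ≤ r then x t + ε • (Φ t *ᵥ v) else Xs (t - r)
      with hxtdef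
    set yt : ℝ → Fin k → ℝ := fun t => if t ≤ r then y t else Ys (t - r) with hytdef
    have hf1c : ContinuousOn (fun t => x t + ε • (Φ t *ᵥ v)) (Ici 0) :=
      hxc.add ((hΦcont.matrix_mulVec continuous_const).const_smul ε).continuousOn
    have hsubXc : ContinuousOn (fun t : ℝ => Xs (t - r)) (Ici r) := by
      refine hXsc.comp (continuous_sub_right r).continuousOn fun t ht => ?_
      rw [mem_Ici, sub_nonneg]
      exact ht
    have hsubYc : ContinuousOn (fun t : ℝ => Ys (t - r)) (Ici r) := by
      refine hYsc.comp (continuous_sub_right r).continuousOn fun t ht => ?_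
      rw [mem_Ici, sub_nonneg]
      exact ht
    have hmatchX : x r + ε • (Φ r *ᵥ v) = Xs (r - r) := by
      rw [sub_self, hXs0]
    have hmatchY : y r = Ys (r - r) := by
      rw [sub_self, hYs0]
    have hxtc : ContinuousOn xt (Ici 0) := by
      rw [hxtdef]
      exact aux_glue_cont hr.le hf1c hsubXc hmatchX
    have hytc : ContinuousOn yt (Ici 0) := by
      rw [hytdef]
      exact aux_glue_cont hr.le (hyc.mono (fun z hz' => hz')) hsubYc hmatchY
    have hmemt : ∀ t, 0 ≤ t → (xt t, yt t) ∈ O := by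
      intro t ht
      by_cases h : t ≤ r
      · show ((if t ≤ r then _ else _), (if t ≤ r then _ else _)) ∈ O
        rw [if_pos h, if_pos h]
        exact hmemO t ⟨ht, h⟩
      · show ((if t ≤ r then _ else _), (if t ≤ r then _ else _)) ∈ O
        rw [if_neg h, if_neg h]
        exact hmem2 (t - r) (by linarith [not_le.mp h])
    have hytO : ∀ s, 0 ≤ s → yt s ∈ Om := fun s hs => ⟨xt s, hmemt s hs⟩
    have hΦvc : ContinuousOn (fun s => Φ s *ᵥ v) (Ici 0) :=
      (hΦcont.matrix_mulVec continuous_const).continuousOn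
    -- the equations on [0, r]
    have hytv : ∀ s, s ≤ r → yt s = y s := by
      intro s hs
      show (if s ≤ r then y s else _) = y s
      rw [if_pos hs]
    have hxtv : ∀ s, s ≤ r → xt s = x s + ε • (Φ s *ᵥ v) := by
      intro s hs
      show (if s ≤ r then _ else _) = _
      rw [if_pos hs]
    have hxt_le : ∀ t ∈ Icc (0:ℝ) r, xt t = xt 0
        + ∫ s in (0:ℝ)..t, (A (yt s) (u s) *ᵥ xt s + b (yt s) (u s)) := by
      intro t ht
      obtain ⟨hiA, hib, -, -⟩ :=
        aux_sys_integrands hUcl hAc hbc hCc hfc hxc hyc hyO humeas huU0 hub (le_refl (0:ℝ)) ht.1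
      obtain ⟨hiA2, -, -, -⟩ :=
        aux_sys_integrands hUcl hAc hbc hCc hfc hΦvc hyc hyO humeas huU0 hub (le_refl (0:ℝ)) ht.1
      have hcongr : EqOn (fun s => A (yt s) (u s) *ᵥ xt s + b (yt s) (u s))
          (fun s => (A (y s) (u s) *ᵥ x s + b (y s) (u s)) + ε • (A (y s) (u s) *ᵥ (Φ s *ᵥ v)))
          (uIcc (0:ℝ) t) := by
        intro s hs
        rw [uIcc_of_le ht.1] at hs
        have hsr : s ≤ r := hs.2.trans ht.2
        show A (yt s) (u s) *ᵥ xt s + b (yt s) (u s) = _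
        rw [hytv s hsr, hxtv s hsr, Matrix.mulVec_add, Matrix.mulVec_smul]
        abel
      have hiA2' : IntervalIntegrable (fun s => ε • (A (y s) (u s) *ᵥ (Φ s *ᵥ v)))
          volume 0 t := hiA2.smul ε
      rw [intervalIntegral.integral_congr hcongr,
        intervalIntegral.integral_add (hiA.add hib) hiA2',
        intervalIntegral.integral_smul]
      have h8 : (∫ s in (0:ℝ)..t, A (y s) (u s) *ᵥ (Φ s *ᵥ v)) = Φ t *ᵥ v - v := by
        have hxx : (∫ s in (0:ℝ)..t, A (y s) (u s) *ᵥ (Φ s *ᵥ v))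
            = ∫ s in (0:ℝ)..t, (At s * Φ s) *ᵥ v := by
          refine intervalIntegral.integral_congr fun s hs => ?_
          rw [uIcc_of_le ht.1] at hs
          show A (y s) (u s) *ᵥ (Φ s *ᵥ v) = (At s * Φ s) *ᵥ v
          rw [hAteq s hs.1, Matrix.mulVec_mulVec]
        have h9 := aux_phiv hAtm hAtb hΦc hΦeqc v t ht.1
        rw [hxx, h9]
        abel
      have h10 : (∫ s in (0:ℝ)..t, (A (y s) (u s) *ᵥ x s + b (y s) (u s))) = x t - x 0 := by
        rw [hxeq t ht.1]
        abel
      rw [h8, h10, hxtv t ht.2, hxtv 0 hr.le, hΦ0, Matrix.one_mulVec, smul_sub]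
      abel
    have hyt_le : ∀ t ∈ Icc (0:ℝ) r, yt t = yt 0
        + ∫ s in (0:ℝ)..t, (f (yt s) (u s) + Cm (yt s) *ᵥ xt s) := by
      intro t ht
      obtain ⟨-, -, hif, hiC⟩ :=
        aux_sys_integrands hUcl hAc hbc hCc hfc hxc hyc hyO humeas huU0 hub (le_refl (0:ℝ)) ht.1
      obtain ⟨-, -, -, hiC2⟩ :=
        aux_sys_integrands hUcl hAc hbc hCc hfc hΦvc hyc hyO humeas huU0 hub (le_refl (0:ℝ)) ht.1
      have hcongr : EqOn (fun s => f (yt s) (u s) + Cm (yt s) *ᵥ xt s)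
          (fun s => (f (y s) (u s) + Cm (y s) *ᵥ x s) + ε • (Cm (y s) *ᵥ (Φ s *ᵥ v)))
          (uIcc (0:ℝ) t) := by
        intro s hs
        rw [uIcc_of_le ht.1] at hs
        have hsr : s ≤ r := hs.2.trans ht.2
        show f (yt s) (u s) + Cm (yt s) *ᵥ xt s = _
        rw [hytv s hsr, hxtv s hsr, Matrix.mulVec_add, Matrix.mulVec_smul]
        abel
      have hiC2' : IntervalIntegrable (fun s => ε • (Cm (y s) *ᵥ (Φ s *ᵥ v)))
          volume 0 t := hiC2.smul ε
      rw [intervalIntegral.integral_congr hcongr,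
        intervalIntegral.integral_add (hif.add hiC) hiC2',
        intervalIntegral.integral_smul]
      have h11 : (∫ s in (0:ℝ)..t, Cm (y s) *ᵥ (Φ s *ᵥ v)) = 0 := by
        have hcg : (∫ s in (0:ℝ)..t, Cm (y s) *ᵥ (Φ s *ᵥ v)) = ∫ s in (0:ℝ)..t, R s *ᵥ v := by
          refine intervalIntegral.integral_congr fun s hs => ?_
          rw [uIcc_of_le ht.1] at hs
          show Cm (y s) *ᵥ (Φ s *ᵥ v) = (Ct s * Φ s) *ᵥ v
          rw [hCteq s hs.1, Matrix.mulVec_mulVec]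
        rw [hcg]
        exact hz t ht
      rw [h11, smul_zero, add_zero, hytv t ht.2, hytv 0 hr.le]
      exact hyeq t ht.1
    -- the equations for all nonnegative times
    have hxteq : ∀ t, 0 ≤ t → xt t = xt 0
        + ∫ s in (0:ℝ)..t, (A (yt s) (u s) *ᵥ xt s + b (yt s) (u s)) := by
      intro t ht
      rcases le_or_gt t r with h | h
      · exact hxt_le t ⟨ht, h⟩
      · obtain ⟨hiA1, hib1, -, -⟩ :=
          aux_sys_integrands hUcl hAc hbc hCc hfc hxtc hytc hytO humeas huU0 hub (le_refl (0:ℝ)) hr.le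
        obtain ⟨hiA2, hib2, -, -⟩ :=
          aux_sys_integrands hUcl hAc hbc hCc hfc hxtc hytc hytO humeas huU0 hub hr.le h.le
        have hi1 : IntervalIntegrable
            (fun s => A (yt s) (u s) *ᵥ xt s + b (yt s) (u s)) volume 0 r := hiA1.add hib1
        have hi2 : IntervalIntegrable
            (fun s => A (yt s) (u s) *ᵥ xt s + b (yt s) (u s)) volume r t := hiA2.add hib2
        have hchg : (∫ s in r..t, (A (yt s) (u s) *ᵥ xt s + b (yt s) (u s)))
            = ∫ τ in (0:ℝ)..(t - r), (A (Ys τ) (us τ) *ᵥ Xs τ + b (Ys τ) (us τ)) := by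
          have h9 := intervalIntegral.integral_comp_sub_right (a := r) (b := t)
            (fun τ => A (Ys τ) (us τ) *ᵥ Xs τ + b (Ys τ) (us τ)) r
          rw [sub_self] at h9
          rw [← h9]
          refine intervalIntegral.integral_congr fun s hs => ?_
          rw [uIcc_of_le h.le] at hs
          have husr : us (s - r) = u s := by
            show u (r + (s - r)) = u s
            congr 1
            ring
          rcases eq_or_lt_of_le hs.1 with he | hlt
          · rw [← he]
            show A (yt r) (u r) *ᵥ xt r + b (yt r) (u r)
                = A (Ys (r - r)) (us (r - r)) *ᵥ Xs (r - r) + b (Ys (r - r)) (us (r - r))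
            rw [sub_self, hXs0, hYs0, hytv r le_rfl, hxtv r le_rfl]
            have hus0 : us 0 = u r := by
              show u (r + 0) = u r
              rw [add_zero]
            rw [hus0]
          · have hnle : ¬ (s ≤ r) := not_le.mpr hlt
            show A (yt s) (u s) *ᵥ xt s + b (yt s) (u s) = _
            have hyts : yt s = Ys (s - r) := by
              show (if s ≤ r then _ else _) = _
              rw [if_neg hnle]
            have hxts : xt s = Xs (s - r) := by
              show (if s ≤ r then _ else _) = _
              rw [if_neg hnle]
            rw [hyts, hxts, husr]
        have hadj := intervalIntegral.integral_add_adjacent_intervals hi1 hi2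
        have hxtr := hxt_le r ⟨hr.le, le_rfl⟩
        have hXst : xt t = Xs (t - r) := by
          show (if t ≤ r then _ else _) = _
          rw [if_neg (not_le.mpr h)]
        rw [hXst, hxeq2 (t - r) (by linarith), hXs0, ← hchg]
        have hxrv : x r + ε • (Φ r *ᵥ v) = xt 0
            + ∫ s in (0:ℝ)..r, (A (yt s) (u s) *ᵥ xt s + b (yt s) (u s)) := by
          rw [← hxtv r le_rfl]
          exact hxtr
        rw [hxrv, ← hadj]
        abel
    have hyteq : ∀ t, 0 ≤ t → yt t = yt 0
        + ∫ s in (0:ℝ)..t, (f (yt s) (u s) + Cm (yt s) *ᵥ xt s) := by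
      intro t ht
      rcases le_or_gt t r with h | h
      · exact hyt_le t ⟨ht, h⟩
      · obtain ⟨-, -, hif1, hiC1⟩ :=
          aux_sys_integrands hUcl hAc hbc hCc hfc hxtc hytc hytO humeas huU0 hub (le_refl (0:ℝ)) hr.le
        obtain ⟨-, -, hif2, hiC2⟩ :=
          aux_sys_integrands hUcl hAc hbc hCc hfc hxtc hytc hytO humeas huU0 hub hr.le h.le
        have hi1 : IntervalIntegrable
            (fun s => f (yt s) (u s) + Cm (yt s) *ᵥ xt s) volume 0 r := hif1.add hiC1
        have hi2 : IntervalIntegrable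
            (fun s => f (yt s) (u s) + Cm (yt s) *ᵥ xt s) volume r t := hif2.add hiC2
        have hchg : (∫ s in r..t, (f (yt s) (u s) + Cm (yt s) *ᵥ xt s))
            = ∫ τ in (0:ℝ)..(t - r), (f (Ys τ) (us τ) + Cm (Ys τ) *ᵥ Xs τ) := by
          have h9 := intervalIntegral.integral_comp_sub_right (a := r) (b := t)
            (fun τ => f (Ys τ) (us τ) + Cm (Ys τ) *ᵥ Xs τ) r
          rw [sub_self] at h9
          rw [← h9]
          refine intervalIntegral.integral_congr fun s hs => ?_
          rw [uIcc_of_le h.le] at hs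
          have husr : us (s - r) = u s := by
            show u (r + (s - r)) = u s
            congr 1
            ring
          rcases eq_or_lt_of_le hs.1 with he | hlt
          · rw [← he]
            show f (yt r) (u r) + Cm (yt r) *ᵥ xt r
                = f (Ys (r - r)) (us (r - r)) + Cm (Ys (r - r)) *ᵥ Xs (r - r)
            rw [sub_self, hXs0, hYs0, hytv r le_rfl, hxtv r le_rfl]
            have hus0 : us 0 = u r := by
              show u (r + 0) = u r
              rw [add_zero]
            rw [hus0]
          · have hnle : ¬ (s ≤ r) := not_le.mpr hlt
            show f (yt s) (u s) + Cm (yt s) *ᵥ xt s = _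
            have hyts : yt s = Ys (s - r) := by
              show (if s ≤ r then _ else _) = _
              rw [if_neg hnle]
            have hxts : xt s = Xs (s - r) := by
              show (if s ≤ r then _ else _) = _
              rw [if_neg hnle]
            rw [hyts, hxts, husr]
        have hadj := intervalIntegral.integral_add_adjacent_intervals hi1 hi2
        have hytr := hyt_le r ⟨hr.le, le_rfl⟩
        have hYst : yt t = Ys (t - r) := by
          show (if t ≤ r then _ else _) = _
          rw [if_neg (not_le.mpr h)]
        rw [hYst, hyeq2 (t - r) (by linarith), hYs0, ← hchg]
        have hyrv : y r = yt 0
            + ∫ s in (0:ℝ)..r, (f (yt s) (u s) + Cm (yt s) *ᵥ xt s) := by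
          rw [← hytv r le_rfl]
          exact hytr
        rw [hyrv, ← hadj]
        abel
    have hsol2 : IsSystemSol n k m O A b Cm f u xt yt := ⟨hxtc, hytc, hmemt, hxteq, hyteq⟩
    have hxt0 : xt 0 = ξ := by
      rw [hxtv 0 hr.le, hx0, hΦ0, Matrix.one_mulVec]
    have hyt0 : yt 0 = y₀ := by
      rw [hytv 0 hr.le, hy0]
    have huniq := hUniq ξ y₀ hξO u ⟨humeas, huU0, hub⟩ xt yt hsol2 hxt0 hyt0
    obtain ⟨t₁, ht₁, hposd⟩ := hdist ξ hξO hξne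
    have hYeq : Y ξ y₀ u t₁ = y t₁ := by
      have h12 := (huniq t₁ ht₁.1).2
      rw [← h12, hytv t₁ ht₁.2]
    rw [hYeq] at hposd
    simp [hydef] at hposd

  -- positivity
  have hpos : ∀ v : Fin n → ℝ, v ≠ 0 → 0 < v ⬝ᵥ (Qmat n k r Cm y Φ *ᵥ v) := by
    intro v hv
    rw [hquad v]
    set g : ℝ → ℝ := fun t => ((qc t)ᵀ *ᵥ v) ⬝ᵥ ((qc t)ᵀ *ᵥ v) with hgdef
    have hwc : Continuous fun t => (qc t)ᵀ *ᵥ v := by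
      refine (continuous_matrix ?_).matrix_mulVec continuous_const
      intro i j
      show Continuous fun t => qc t j i
      exact hqcc j i
    have hgc : Continuous g := by
      show Continuous fun t => ∑ a, ((qc t)ᵀ *ᵥ v) a * ((qc t)ᵀ *ᵥ v) a
      exact continuous_finset_sum _ fun a _ =>
        ((continuous_apply a).comp hwc).mul ((continuous_apply a).comp hwc)
    have hgnn : ∀ t, 0 ≤ g t := by
      intro t
      show (0:ℝ) ≤ ∑ a, ((qc t)ᵀ *ᵥ v) a * ((qc t)ᵀ *ᵥ v) a
      exact Finset.sum_nonneg fun a _ => mul_self_nonneg _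
    have hnonneg : 0 ≤ ∫ t in (0:ℝ)..r, g t :=
      intervalIntegral.integral_nonneg hr.le (fun t _ => hgnn t)
    rcases eq_or_lt_of_le hnonneg with heq | hlt
    · exfalso
      have hae : g =ᵐ[volume.restrict (Ioc (0:ℝ) r)] 0 := by
        have hgi : IntegrableOn g (Ioc 0 r) volume :=
          (hgc.intervalIntegrable 0 r).1
        have h0 : (∫ t in Ioc (0:ℝ) r, g t) = 0 := by
          rw [← intervalIntegral.integral_of_le hr.le, ← heq]
        exact (MeasureTheory.integral_eq_zero_iff_of_nonneg_ae
          (Eventually.of_forall fun t => hgnn t) hgi).mp h0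
      refine hker v hv ?_
      intro t ht
      rw [← hqct v t]
      by_contra hne
      have hgt : 0 < g t := by
        rcases lt_or_eq_of_le (hgnn t) with h | h
        · exact h
        · exfalso
          apply hne
          funext a
          show ((qc t)ᵀ *ᵥ v) a = 0
          have hsum : ∑ a, ((qc t)ᵀ *ᵥ v) a * ((qc t)ᵀ *ᵥ v) a = 0 := h.symm
          have := (Finset.sum_eq_zero_iff_of_nonneg
            (fun a _ => mul_self_nonneg _)).mp hsum a (Finset.mem_univ a)
          exact mul_self_eq_zero.mp this
      have hU : IsOpen {s : ℝ | 0 < g s} := isOpen_lt continuous_const hgc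
      obtain ⟨δ', hδ'0, hball⟩ := Metric.isOpen_iff.mp hU t hgt
      have hab : max (t - δ') 0 < min (t + δ') r := by
        rcases ht with ⟨ht1, ht2⟩
        refine lt_min (max_lt (by linarith) (by linarith)) (max_lt (by linarith) hr)
      have hsub : Ioo (max (t - δ') 0) (min (t + δ') r) ⊆ {s | ¬ g s = 0} ∩ Ioc 0 r := by
        intro s hs
        have hs1 : t - δ' < s := lt_of_le_of_lt (le_max_left _ _) hs.1
        have hs2 : (0:ℝ) < s := lt_of_le_of_lt (le_max_right _ _) hs.1
        have hs3 : s < t + δ' := lt_of_lt_of_le hs.2 (min_le_left _ _)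
        have hs4 : s ≤ r := (lt_of_lt_of_le hs.2 (min_le_right _ _)).le
        constructor
        · have hbm : s ∈ Metric.ball t δ' := by
            rw [Real.ball_eq_Ioo]
            exact ⟨hs1, hs3⟩
          exact ne_of_gt (hball hbm)
        · exact ⟨hs2, hs4⟩
      have hm0 : volume ({s : ℝ | ¬ g s = 0} ∩ Ioc (0:ℝ) r) = 0 := by
        have h7 := hae
        rw [EventuallyEq, ae_iff] at h7
        simp only [Pi.zero_apply] at h7
        have hms : MeasurableSet {s : ℝ | ¬ g s = 0} := by
          have : {s : ℝ | ¬ g s = 0} = (g ⁻¹' {0})ᶜ := by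
            ext s
            simp [Set.mem_preimage]
          rw [this]
          exact (hgc.measurable (measurableSet_singleton 0)).compl
        rwa [Measure.restrict_apply hms] at h7
      have hJ0 : volume (Ioo (max (t - δ') 0) (min (t + δ') r)) = 0 :=
        measure_mono_null hsub hm0
      rw [Real.volume_Ioo] at hJ0
      have : ENNReal.ofReal (min (t + δ') r - max (t - δ') 0) ≠ 0 := by
        simp only [ne_eq, ENNReal.ofReal_eq_zero, not_le]
        linarith
      exact this hJ0
    · exact hlt
  have hQpos : (Qmat n k r Cm y Φ).PosDef := by
    refine Matrix.PosDef.of_dotProduct_mulVec_pos hherm fun v hv => ?_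
    have hsv : star v = v := by
      funext i
      simp
    rw [hsv]
    exact hpos v hv
  refine ⟨hQpos, ?_⟩
  have hdet : IsUnit (Qmat n k r Cm y Φ).det := isUnit_iff_ne_zero.mpr hQpos.det_pos.ne'
  have hwint : (∫ t in (0:ℝ)..r, qmat n k Cm y Φ t *ᵥ pvec n k m b Cm f y u Φ t)
      = Qmat n k r Cm y Φ *ᵥ x₀ := by
    have hcongr : EqOn (fun t => qmat n k Cm y Φ t *ᵥ pvec n k m b Cm f y u Φ t)
        (fun t => S t *ᵥ x₀) (uIcc (0:ℝ) r) := by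
      intro t ht'
      rw [uIcc_of_le hr.le] at ht'
      show qmat n k Cm y Φ t *ᵥ pvec n k m b Cm f y u Φ t = S t *ᵥ x₀
      rw [hqeq t ht'.1, hp t ht'.1, ← hqct x₀ t]
      show qc t *ᵥ ((qc t)ᵀ *ᵥ x₀) = (qc t * (qc t)ᵀ) *ᵥ x₀
      rw [Matrix.mulVec_mulVec]
    rw [intervalIntegral.integral_congr hcongr]
    funext i
    have hSvi : IntervalIntegrable (fun t => S t *ᵥ x₀) volume 0 r :=
      ((continuous_matrix hScont).matrix_mulVec continuous_const).intervalIntegrable 0 r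
    rw [aux_pi_apply hSvi i]
    show (∫ t in (0:ℝ)..r, (S t *ᵥ x₀) i) = ∑ j, Qmat n k r Cm y Φ i j * x₀ j
    have hent : ∀ t, (S t *ᵥ x₀) i = ∑ j, S t i j * x₀ j := fun t => rfl
    simp_rw [hent]
    rw [intervalIntegral.integral_finset_sum (f := fun j t => S t i j * x₀ j)
      (fun j _ => ((hScont i j).mul continuous_const).intervalIntegrable 0 r)]
    refine Finset.sum_congr rfl fun j _ => ?_
    rw [intervalIntegral.integral_mul_const, hQentry i j]
  rw [hwint, Matrix.mulVec_mulVec, Matrix.nonsing_inv_mul _ hdet, Matrix.one_mulVec]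
end
end
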